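/- arXiv:1610.00332 — 9 statements merged into one kernel-verified Lean document; each statement's English description precedes it below -/
import Mathlib

section
/- Let g : (0,∞) → [0,∞) be measurable with ∫₀^∞ g(x) dx < ∞ and ∫₀¹ g(x) dx > 0, and suppose that g(x) = x^{-γ}·L₁(x) for all x > 1, where γ > 1 and L₁ : (0,∞) → ℝ is slowly varying at infinity and bounded away from 0 and ∞ on every interval of the form [1, T]. Then, as h → ∞, ∫₀^∞ g(x)·g(x+h) dx is asymptotically equivalent to (∫₀^∞ g(x) dx) · L₁(h) · h^{-γ}, i.e. the ratio of the two sides tends to 1. Consequently, if additionally 0 < ∫₀^∞ g(x)² dx < ∞, the correlation function ρ_g(h) = (∫₀^∞ g(x)·g(x+h) dx)/(∫₀^∞ g(x)² dx) satisfies ρ_g(h) ~ (∫₀^∞ g(x) dx / ∫₀^∞ g(x)² dx) · L₁(h) · h^{-γ} as h → ∞. -/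
open MeasureTheory Set Filter

/-- Karamata's Uniform Convergence Theorem, additive form. -/
private lemma slow_uct (k : ℝ → ℝ) (hk : Measurable k)
    (hks : ∀ s : ℝ, Tendsto (fun u => k (u + s) - k u) atTop (nhds 0))
    {ε : ℝ} (hε : 0 < ε) :
    ∀ᶠ u in atTop, ∀ s ∈ Icc (0:ℝ) 1, |k (u + s) - k u| ≤ ε := by
  by_contra hcon
  rw [Filter.not_eventually] at hcon
  have H : ∀ n : ℕ, ∃ u : ℝ, (n : ℝ) ≤ u ∧ ∃ s ∈ Icc (0:ℝ) 1, ε < |k (u + s) - k u| := by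
    intro n
    obtain ⟨u, hu, hPu⟩ := Filter.frequently_atTop.1 hcon (n : ℝ)
    push_neg at hPu
    exact ⟨u, hu, hPu⟩
  choose u hu s hs hεs using H
  have hu_tendsto : Tendsto u atTop atTop :=
    tendsto_atTop_mono hu tendsto_natCast_atTop_atTop
  have hc_tendsto : Tendsto (fun n => u n + s n) atTop atTop := by
    refine tendsto_atTop_mono (fun n => ?_) tendsto_natCast_atTop_atTop
    have := (hs n).1
    linarith [hu n]
  -- the family of "good" sets for a base sequence b
  set V : (ℕ → ℝ) → ℕ → Set ℝ := fun b n =>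
    Icc (0:ℝ) 2 ∩ ⋂ m, ⋂ (_ : n ≤ m), {x : ℝ | |k (b m + x) - k (b m)| < ε / 2} with hV
  have hVmem : ∀ b n x, x ∈ V b n ↔ x ∈ Icc (0:ℝ) 2 ∧ ∀ m, n ≤ m → |k (b m + x) - k (b m)| < ε / 2 := by
    intro b n x
    simp [hV, mem_iInter]
  have hVmeas : ∀ b n, MeasurableSet (V b n) := by
    intro b n
    refine measurableSet_Icc.inter (MeasurableSet.iInter fun m => MeasurableSet.iInter fun _ => ?_)
    exact measurableSet_lt (((hk.comp (measurable_const_add (b m))).sub measurable_const).abs)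
      measurable_const
  have key : ∀ b : ℕ → ℝ, Tendsto b atTop atTop →
      ∀ᶠ n in atTop, ENNReal.ofReal (3/2) < volume (V b n) := by
    intro b hb
    have hmono : Monotone (V b) := by
      intro n n' hnn' x hx
      rw [hVmem] at hx ⊢
      exact ⟨hx.1, fun m hm => hx.2 m (hnn'.trans hm)⟩
    have hunion : (⋃ n, V b n) = Icc (0:ℝ) 2 := by
      ext x
      simp only [mem_iUnion]
      constructor
      · rintro ⟨n, hn⟩
        exact ((hVmem b n x).1 hn).1
      · intro hx
        have htd : Tendsto (fun m => k (b m + x) - k (b m)) atTop (nhds 0) :=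
          (hks x).comp hb
        have := (NormedAddCommGroup.tendsto_nhds_zero.mp htd (ε/2) (by linarith))
        obtain ⟨N, hN⟩ := eventually_atTop.1 this
        refine ⟨N, (hVmem b N x).2 ⟨hx, fun m hm => ?_⟩⟩
        have := hN m hm
        rwa [Real.norm_eq_abs] at this
    have htend := tendsto_measure_iUnion_atTop (μ := volume) hmono
    rw [hunion, Real.volume_Icc] at htend
    have hlt : ENNReal.ofReal (3/2) < ENNReal.ofReal (2 - 0) := by
      rw [ENNReal.ofReal_lt_ofReal_iff (by norm_num)]
      norm_num
    exact htend.eventually_mem (Ioi_mem_nhds hlt)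
  obtain ⟨N, hVN, hWN⟩ := (((key u hu_tendsto).and (key _ hc_tendsto)).exists)
  -- translate W and intersect
  set A : Set ℝ := V u N with hA
  set B : Set ℝ := (fun x => (-(s N)) + x) ⁻¹' (V (fun n => u n + s n) N) with hB
  have hBmeas : MeasurableSet B := (hVmeas _ N).preimage (measurable_const_add _)
  have hvolB : volume B = volume (V (fun n => u n + s n) N) :=
    measure_preimage_add volume _ _
  have hsub : A ∪ B ⊆ Icc (0:ℝ) 3 := by
    rintro x (hx | hx)
    · have := ((hVmem u N x).1 hx).1
      exact ⟨this.1, by linarith [this.2]⟩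
    · obtain ⟨ha, hb2⟩ := ((hVmem _ N _).1 hx).1
      have hs1 := (hs N).1
      have hs2 := (hs N).2
      have ha' : 0 ≤ -s N + x := ha
      have hb2' : -s N + x ≤ 2 := hb2
      exact ⟨by linarith, by linarith⟩
  have hmeasunion : volume (A ∪ B) ≤ ENNReal.ofReal 3 := by
    calc volume (A ∪ B) ≤ volume (Icc (0:ℝ) 3) := measure_mono hsub
    _ = ENNReal.ofReal 3 := by rw [Real.volume_Icc]; norm_num
  have hsum : ENNReal.ofReal 3 < volume A + volume B := by
    have : ENNReal.ofReal 3 = ENNReal.ofReal (3/2) + ENNReal.ofReal (3/2) := by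
      rw [← ENNReal.ofReal_add (by norm_num) (by norm_num)]; norm_num
    rw [this, hvolB]
    exact ENNReal.add_lt_add hVN hWN
  have hABne : (A ∩ B).Nonempty := by
    rw [Set.nonempty_iff_ne_empty]
    intro hempty
    have := measure_union_add_inter A hBmeas (μ := volume)
    rw [hempty, measure_empty, add_zero] at this
    rw [this] at hmeasunion
    exact absurd hmeasunion (not_le.2 hsum)
  obtain ⟨x, hxA, hxB⟩ := hABne
  have h1 : |k (u N + x) - k (u N)| < ε / 2 := ((hVmem u N x).1 hxA).2 N le_rfl
  have h2' := ((hVmem (fun n => u n + s n) N _).1 hxB).2 N le_rfl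
  have heq : u N + s N + (-(s N) + x) = u N + x := by ring
  rw [heq] at h2'
  have : |k (u N + s N) - k (u N)| ≤ |k (u N + s N) - k (u N + x)| + |k (u N + x) - k (u N)| :=
    abs_sub_le _ _ _
  rw [abs_sub_comm (k (u N + s N)) (k (u N + x))] at this
  have := hεs N
  linarith [abs_sub_comm (k (u N + s N)) (k (u N + x)) ▸ (abs_sub_le (k (u N + s N)) (k (u N + x)) (k (u N)))]

/-- Potter-type bound (with ε = 1). -/
private lemma slow_potter (k : ℝ → ℝ) (hk : Measurable k)
    (hks : ∀ s : ℝ, Tendsto (fun u => k (u + s) - k u) atTop (nhds 0)) :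
    ∃ U : ℝ, 1 ≤ U ∧ ∀ u ≥ U, ∀ s : ℝ, 0 ≤ s → |k (u + s) - k u| ≤ s + 1 := by
  obtain ⟨U₀, hU₀⟩ := eventually_atTop.1 (slow_uct k hk hks one_pos)
  set U := max U₀ 1 with hU
  have hmain : ∀ n : ℕ, ∀ u ≥ U, ∀ s : ℝ, 0 ≤ s → s ≤ n → |k (u + s) - k u| ≤ n := by
    intro n
    induction n with
    | zero =>
      intro u hu s hs0 hsn
      have : s = 0 := le_antisymm (by exact_mod_cast hsn) hs0
      simp [this]
    | succ n ih =>
      intro u hu s hs0 hsn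
      by_cases hs1 : s ≤ 1
      · have := hU₀ u (le_trans (le_max_left _ _) hu) s ⟨hs0, hs1⟩
        have hn : (1:ℝ) ≤ (n:ℝ) + 1 := by linarith [Nat.cast_nonneg (α := ℝ) n]
        push_cast
        linarith
      · push_neg at hs1
        have hu1 : u + 1 ≥ U := by linarith
        have h1 : |k ((u + 1) + (s - 1)) - k (u + 1)| ≤ n := by
          refine ih (u + 1) hu1 (s - 1) (by linarith) ?_
          push_cast at hsn ⊢
          linarith
        have h2 : |k (u + 1) - k u| ≤ 1 :=
          hU₀ u (le_trans (le_max_left _ _) hu) 1 ⟨zero_le_one, le_rfl⟩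
        have heq : (u + 1) + (s - 1) = u + s := by ring
        rw [heq] at h1
        have : |k (u + s) - k u| ≤ |k (u + s) - k (u + 1)| + |k (u + 1) - k u| :=
          abs_sub_le _ _ _
        push_cast
        linarith
  refine ⟨U, le_max_right _ _, fun u hu s hs0 => ?_⟩
  have h1 := hmain ⌈s⌉₊ u hu s hs0 (Nat.le_ceil s)
  have h2 : (⌈s⌉₊ : ℝ) ≤ s + 1 := (Nat.ceil_lt_add_one hs0).le
  linarith

/-- Proposition (long-run asymptotics, case γ > 1): if `g(x) = x^(-γ) L₁(x)` for `x > 1` with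
`L₁` slowly varying at infinity, then `∫₀^∞ g(x) g(x+h) dx ~ (∫₀^∞ g) · L₁(h) · h^(-γ)` as
`h → ∞`; consequently the BSS autocorrelation `ρ_g(h) ~ (∫g/∫g²) · L₁(h) · h^(-γ)`. -/
theorem bss_acf_long_time_asymptotics_integrable_kernel
    (γ : ℝ) (hγ : 1 < γ)
    (g L₁ : ℝ → ℝ)
    (hg_meas : Measurable g)
    (hg_nonneg : ∀ x ∈ Ioi (0:ℝ), 0 ≤ g x)
    (hg_int : IntegrableOn g (Ioi 0))
    (hg_pos : 0 < ∫ x in Ioc (0:ℝ) 1, g x)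
    (hform : ∀ x > (1:ℝ), g x = x ^ (-γ) * L₁ x)
    (hL₁_slow : ∀ t > (0:ℝ), Tendsto (fun x => L₁ (t * x) / L₁ x) atTop (nhds 1))
    (hL₁_bdd : ∀ T ≥ (1:ℝ), ∃ c Cu : ℝ, 0 < c ∧ ∀ x ∈ Icc (1:ℝ) T, c ≤ L₁ x ∧ L₁ x ≤ Cu) :
    Tendsto
      (fun h => (∫ x in Ioi (0:ℝ), g x * g (x + h)) /
        ((∫ x in Ioi (0:ℝ), g x) * L₁ h * h ^ (-γ))) atTop (nhds 1)
    ∧ (IntegrableOn (fun x => (g x) ^ 2) (Ioi 0) →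
        0 < ∫ x in Ioi (0:ℝ), (g x) ^ 2 →
        Tendsto
          (fun h => ((∫ x in Ioi (0:ℝ), g x * g (x + h)) / ∫ x in Ioi (0:ℝ), (g x) ^ 2) /
            (((∫ x in Ioi (0:ℝ), g x) / ∫ x in Ioi (0:ℝ), (g x) ^ 2) * L₁ h * h ^ (-γ)))
          atTop (nhds 1)) := by
  -- positivity of L₁ on [1, ∞)
  have hL₁pos : ∀ y : ℝ, 1 ≤ y → 0 < L₁ y := by
    intro y hy
    obtain ⟨c, Cu, hc, hb⟩ := hL₁_bdd y hy
    exact hc.trans_le (hb y ⟨hy, le_rfl⟩).1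
  -- positivity of the total integral
  have hg_ae : 0 ≤ᵐ[volume.restrict (Ioi (0:ℝ))] g :=
    (ae_restrict_iff' measurableSet_Ioi).2 (ae_of_all _ hg_nonneg)
  have hI_pos : 0 < ∫ x in Ioi (0:ℝ), g x :=
    lt_of_lt_of_le hg_pos
      (setIntegral_mono_set hg_int hg_ae (HasSubset.Subset.eventuallyLE Ioc_subset_Ioi_self))
  -- the additive log form of L₁
  set k : ℝ → ℝ := fun u => Real.log (g (Real.exp u)) + γ * u with hk_def
  have hk_meas : Measurable k :=
    ((hg_meas.comp Real.measurable_exp).log).add (measurable_const.mul measurable_id)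
  have hk_eq : ∀ u : ℝ, 0 < u → k u = Real.log (L₁ (Real.exp u)) := by
    intro u hu
    have he : (1:ℝ) < Real.exp u := by
      rw [← Real.exp_zero]
      exact Real.exp_lt_exp.2 hu
    have hrp : (0:ℝ) < Real.exp u ^ (-γ) := Real.rpow_pos_of_pos (Real.exp_pos u) _
    have hLp : 0 < L₁ (Real.exp u) := hL₁pos _ he.le
    rw [hk_def]
    simp only
    rw [hform _ he, Real.log_mul (ne_of_gt hrp) (ne_of_gt hLp),
      Real.log_rpow (Real.exp_pos u), Real.log_exp]
    ring
  have hk_exp : ∀ y : ℝ, 1 < y → Real.exp (k (Real.log y)) = L₁ y := by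
    intro y hy
    have h0 : 0 < Real.log y := Real.log_pos hy
    have hey : Real.exp (Real.log y) = y := Real.exp_log (by linarith)
    rw [hk_eq _ h0, hey, Real.exp_log (hL₁pos y hy.le)]
  have hgy : ∀ y : ℝ, 1 < y → g y = Real.exp ((-γ) * Real.log y + k (Real.log y)) := by
    intro y hy
    rw [Real.exp_add, hk_exp y hy, hform y hy, Real.rpow_def_of_pos (by linarith)]
    ring_nf
  -- slow variation in additive form
  have hks : ∀ s : ℝ, Tendsto (fun u => k (u + s) - k u) atTop (nhds 0) := by
    intro s
    have ht : Tendsto (fun u : ℝ => L₁ (Real.exp s * Real.exp u) / L₁ (Real.exp u)) atTop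
        (nhds 1) := (hL₁_slow (Real.exp s) (Real.exp_pos s)).comp Real.tendsto_exp_atTop
    have hlog : Tendsto (fun u : ℝ => Real.log (L₁ (Real.exp s * Real.exp u) / L₁ (Real.exp u)))
        atTop (nhds 0) := by
      have := (Real.continuousAt_log one_ne_zero).tendsto.comp ht
      simpa [Function.comp_def] using this
    refine hlog.congr' ?_
    filter_upwards [eventually_gt_atTop (max 0 (-s))] with u hu
    have hu0 : 0 < u := lt_of_le_of_lt (le_max_left _ _) hu
    have hus : 0 < u + s := by
      have := lt_of_le_of_lt (le_max_right _ _) hu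
      linarith
    have h1 : Real.exp s * Real.exp u = Real.exp (u + s) := by
      rw [← Real.exp_add]
      ring_nf
    have hL1 : L₁ (Real.exp (u + s)) ≠ 0 :=
      ne_of_gt (hL₁pos _ (Real.one_le_exp hus.le))
    have hL2 : L₁ (Real.exp u) ≠ 0 := ne_of_gt (hL₁pos _ (Real.one_le_exp hu0.le))
    rw [h1, Real.log_div hL1 hL2, hk_eq _ hus, hk_eq _ hu0]
  obtain ⟨U, hU1, hpot⟩ := slow_potter k hk_meas hks
  -- the dominated convergence step
  have hmain : Tendsto (fun h : ℝ => ∫ x in Ioi (0:ℝ), g x * g (x + h) / (L₁ h * h ^ (-γ)))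
      atTop (nhds (∫ x in Ioi (0:ℝ), g x)) := by
    refine tendsto_integral_filter_of_dominated_convergence (fun x => Real.exp 1 * g x)
      ?_ ?_ ?_ ?_
    · exact Filter.Eventually.of_forall fun h =>
        ((hg_meas.mul (hg_meas.comp (measurable_id.add_const h))).div_const _).aestronglyMeasurable
    · -- uniform bound via Potter
      filter_upwards [eventually_ge_atTop (max (Real.exp U) 2)] with h hh
      have hh2 : (2:ℝ) ≤ h := le_trans (le_max_right _ _) hh
      have hhU : Real.exp U ≤ h := le_trans (le_max_left _ _) hh
      have hh1 : (1:ℝ) < h := by linarith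
      have hlogh : U ≤ Real.log h := (Real.le_log_iff_exp_le (by linarith)).2 hhU
      rw [ae_restrict_iff' measurableSet_Ioi]
      refine Filter.Eventually.of_forall fun x hx => ?_
      have hx0 : (0:ℝ) < x := hx
      have hxh : (1:ℝ) < x + h := by linarith
      have hgx := hg_nonneg x hx
      have hden : L₁ h * h ^ (-γ) = Real.exp ((-γ) * Real.log h + k (Real.log h)) := by
        rw [Real.exp_add, hk_exp h hh1, Real.rpow_def_of_pos (by linarith)]
        ring
      set sh := Real.log (x + h) - Real.log h with hsh_def
      have hs0 : 0 ≤ sh := by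
        have := Real.log_le_log (by linarith : (0:ℝ) < h) (by linarith : h ≤ x + h)
        simp [hsh_def]
        linarith
      have hkpot : |k (Real.log h + sh) - k (Real.log h)| ≤ sh + 1 := hpot _ hlogh sh hs0
      have hls : Real.log (x + h) = Real.log h + sh := by rw [hsh_def]; ring
      have hratio : g x * g (x + h) / (L₁ h * h ^ (-γ))
          = g x * Real.exp ((-γ) * sh + (k (Real.log h + sh) - k (Real.log h))) := by
        rw [mul_div_assoc, hgy (x + h) hxh, hden, ← Real.exp_sub, hls]
        congr 1
        ring
      rw [hratio, Real.norm_eq_abs, abs_mul, abs_of_nonneg hgx,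
        abs_of_pos (Real.exp_pos _)]
      have hE : (-γ) * sh + (k (Real.log h + sh) - k (Real.log h)) ≤ 1 := by
        have h1 := (abs_le.1 hkpot).2
        nlinarith
      calc g x * Real.exp ((-γ) * sh + (k (Real.log h + sh) - k (Real.log h)))
          ≤ g x * Real.exp 1 := mul_le_mul_of_nonneg_left (Real.exp_le_exp.2 hE) hgx
        _ = Real.exp 1 * g x := mul_comm _ _
    · exact hg_int.const_mul _
    · -- pointwise limit
      rw [ae_restrict_iff' measurableSet_Ioi]
      refine Filter.Eventually.of_forall fun x hx => ?_
      have hx0 : (0:ℝ) < x := hx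
      have hslim : Tendsto (fun h : ℝ => Real.log (x + h) - Real.log h) atTop (nhds 0) := by
        have hdiv : Tendsto (fun h : ℝ => (x + h) / h) atTop (nhds 1) := by
          have h1 : Tendsto (fun h : ℝ => x / h + 1) atTop (nhds (0 + 1)) :=
            (tendsto_const_nhds.div_atTop tendsto_id).add tendsto_const_nhds
          rw [zero_add] at h1
          refine Tendsto.congr' ?_ h1
          filter_upwards [eventually_gt_atTop (0:ℝ)] with h hh
          field_simp
        have hcont := (Real.continuousAt_log one_ne_zero).tendsto.comp hdiv
        simp only [Function.comp_def, Real.log_one] at hcont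
        refine Tendsto.congr' ?_ hcont
        filter_upwards [eventually_gt_atTop (0:ℝ)] with h hh
        rw [Real.log_div (by positivity) (ne_of_gt hh)]
      have hklim : Tendsto (fun h : ℝ => k (Real.log (x + h)) - k (Real.log h)) atTop
          (nhds 0) := by
        rw [NormedAddCommGroup.tendsto_nhds_zero]
        intro ε hε
        have huct := slow_uct k hk_meas hks (half_pos hε)
        have h1 : ∀ᶠ h : ℝ in atTop, ∀ s ∈ Icc (0:ℝ) 1,
            |k (Real.log h + s) - k (Real.log h)| ≤ ε / 2 :=
          Real.tendsto_log_atTop.eventually huct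
        have h2 : ∀ᶠ h : ℝ in atTop, Real.log (x + h) - Real.log h ∈ Icc (0:ℝ) 1 := by
          filter_upwards [NormedAddCommGroup.tendsto_nhds_zero.mp hslim 1 one_pos,
            eventually_gt_atTop (0:ℝ)] with h hh1 hh2
          rw [Real.norm_eq_abs] at hh1
          have hmono := Real.log_le_log hh2 (by linarith : h ≤ x + h)
          exact ⟨by linarith, by cases abs_le.1 hh1.le with | intro a b => linarith⟩
        filter_upwards [h1, h2] with h hh1 hh2
        have := hh1 _ hh2
        rw [show Real.log h + (Real.log (x + h) - Real.log h) = Real.log (x + h) by ring] at this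
        rw [Real.norm_eq_abs]
        linarith
      have hD : Tendsto (fun h : ℝ => (-γ) * (Real.log (x + h) - Real.log h)
          + (k (Real.log (x + h)) - k (Real.log h))) atTop (nhds 0) := by
        have := (hslim.const_mul (-γ)).add hklim
        simpa using this
      have hexp : Tendsto (fun h : ℝ => Real.exp ((-γ) * (Real.log (x + h) - Real.log h)
          + (k (Real.log (x + h)) - k (Real.log h)))) atTop (nhds 1) := by
        have := (Real.continuous_exp.tendsto (0:ℝ)).comp hD
        simpa [Function.comp_def] using this
      have hQ : Tendsto (fun h : ℝ => g (x + h) / (L₁ h * h ^ (-γ))) atTop (nhds 1) := by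
        refine Tendsto.congr' ?_ hexp
        filter_upwards [eventually_gt_atTop (1:ℝ)] with h hh1
        have hxh : (1:ℝ) < x + h := by linarith
        have hden : L₁ h * h ^ (-γ) = Real.exp ((-γ) * Real.log h + k (Real.log h)) := by
          rw [Real.exp_add, hk_exp h hh1, Real.rpow_def_of_pos (by linarith)]
          ring
        rw [hgy (x + h) hxh, hden, ← Real.exp_sub]
        congr 1
        ring
      have := hQ.const_mul (g x)
      rw [mul_one] at this
      refine Tendsto.congr ?_ this
      intro h
      rw [mul_div_assoc]
  -- conclusion, part 1
  have h1 : Tendsto (fun h : ℝ => (∫ x in Ioi (0:ℝ), g x * g (x + h)) /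
      ((∫ x in Ioi (0:ℝ), g x) * L₁ h * h ^ (-γ))) atTop (nhds 1) := by
    have h2 := hmain.div_const (∫ x in Ioi (0:ℝ), g x)
    rw [div_self hI_pos.ne'] at h2
    refine Tendsto.congr (fun h => ?_) h2
    rw [integral_div, div_div]
    congr 1
    ring
  refine ⟨h1, fun hg2_int hS => ?_⟩
  have hS0 : (∫ x in Ioi (0:ℝ), (g x) ^ 2) ≠ 0 := ne_of_gt hS
  refine Tendsto.congr (fun h => ?_) h1
  rcases eq_or_ne ((∫ x in Ioi (0:ℝ), g x) * L₁ h * h ^ (-γ)) 0 with h0 | h0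
  · rw [h0, div_zero]
    have heq : (∫ x in Ioi (0:ℝ), g x) / (∫ x in Ioi (0:ℝ), (g x) ^ 2) * L₁ h * h ^ (-γ)
        = ((∫ x in Ioi (0:ℝ), g x) * L₁ h * h ^ (-γ)) / (∫ x in Ioi (0:ℝ), (g x) ^ 2) := by
      ring
    rw [heq, h0, zero_div, div_zero]
  · field_simp
end

section
/- Let g : (0,∞) → [0,∞) be measurable with ∫₀¹ g(x) dx < ∞, and suppose that g(x) = x^{-γ}·L₁(x) for all x > 1, where γ ∈ (1/2, 1) and L₁ : (0,∞) → ℝ is slowly varying at infinity and bounded away from 0 and ∞ on every interval of the form [1, T]. Then, as h → ∞, ∫₀^∞ g(x)·g(x+h) dx is asymptotically equivalent to (∫₀^∞ y^{-γ}(1+y)^{-γ} dy) · L₁(h)² · h^{1−2γ}, i.e. the ratio of the two sides tends to 1. -/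
open MeasureTheory Set Filter

/-- Karamata uniform convergence theorem, additive form. -/
lemma uct_additive (k : ℝ → ℝ) (hk : Measurable k)
    (hslow : ∀ s : ℝ, Tendsto (fun x => k (x + s) - k x) atTop (nhds 0))
    {ε : ℝ} (hε : 0 < ε) :
    ∃ X : ℝ, ∀ x ≥ X, ∀ u ∈ Icc (0:ℝ) 1, |k (x + u) - k x| ≤ ε := by
  by_contra hcon
  push_neg at hcon
  choose xs hxs us hus hgt using fun n : ℕ => hcon n
  have hx_top : Tendsto xs atTop atTop :=
    tendsto_atTop_mono hxs tendsto_natCast_atTop_atTop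
  have hxu_top : Tendsto (fun n => xs n + us n) atTop atTop :=
    tendsto_atTop_mono (fun n => le_add_of_nonneg_right (hus n).1) hx_top
  set F : ℕ → ℝ → ℝ × ℝ := fun n u =>
    (k (xs n + u) - k (xs n), k (xs n + us n + u) - k (xs n + us n)) with hF
  have hFmeas : ∀ n, StronglyMeasurable (F n) := by
    intro n
    apply Measurable.stronglyMeasurable
    exact ((hk.comp (measurable_const.add measurable_id)).sub measurable_const).prod
      ((hk.comp (measurable_const.add measurable_id)).sub measurable_const)
  have hFlim : ∀ u : ℝ, Tendsto (fun n => F n u) atTop (nhds ((0:ℝ), (0:ℝ))) := by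
    intro u
    exact Tendsto.prodMk_nhds ((hslow u).comp hx_top) ((hslow u).comp hxu_top)
  obtain ⟨t, hts, htm, htμ, hunif⟩ :=
    tendstoUniformlyOn_of_ae_tendsto (μ := volume) (s := Icc (0:ℝ) 2)
      hFmeas stronglyMeasurable_const measurableSet_Icc
      (by rw [Real.volume_Icc]; exact ENNReal.ofReal_ne_top)
      (Filter.Eventually.of_forall (fun u _ => hFlim u)) (ε := 1/4) (by norm_num)
  set A : Set ℝ := Icc (0:ℝ) 2 \ t with hA
  have hAmeas : MeasurableSet A := measurableSet_Icc.diff htm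
  -- measure of A is at least 7/4
  have hμA : ENNReal.ofReal 2 ≤ volume A + ENNReal.ofReal (1/4) := by
    calc ENNReal.ofReal 2 = volume (Icc (0:ℝ) 2) := by rw [Real.volume_Icc]; norm_num
    _ ≤ volume (A ∪ t) := measure_mono (fun x hx => by
        by_cases h : x ∈ t
        · exact Or.inr h
        · exact Or.inl ⟨hx, h⟩)
    _ ≤ volume A + volume t := measure_union_le _ _
    _ ≤ volume A + ENNReal.ofReal (1/4) := add_le_add_right htμ _
  -- get n with uniform smallness
  rw [Metric.tendstoUniformlyOn_iff] at hunif
  obtain ⟨n, hn⟩ := (hunif (ε/2) (by positivity)).exists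
  have hsmall : ∀ u ∈ A, |k (xs n + u) - k (xs n)| < ε/2 ∧
      |k (xs n + us n + u) - k (xs n + us n)| < ε/2 := by
    intro u hu
    have := hn u hu
    rw [Prod.dist_eq, max_lt_iff] at this
    simp only [Real.dist_eq, zero_sub, abs_neg] at this
    exact this
  -- translate of A
  set B : Set ℝ := (fun x => x + (-(us n))) ⁻¹' A with hB
  have hBmeas : MeasurableSet B := hAmeas.preimage (measurable_id.add_const _)
  have hμB : volume B = volume A := measure_preimage_add_right _ _ _
  have hnotdisj : ¬ Disjoint A B := by
    intro hdisj
    have hsub : A ∪ B ⊆ Icc (0:ℝ) 3 := by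
      rintro x (hx | hx)
      · exact ⟨hx.1.1, hx.1.2.trans (by norm_num)⟩
      · have hx' : x + (-(us n)) ∈ Icc (0:ℝ) 2 := hx.1
        have h1 := hx'.1; have h2 := hx'.2
        have h3 := (hus n).1; have h4 := (hus n).2
        constructor <;> simp at h1 h2 ⊢ <;> linarith
    have hle : volume (A ∪ B) ≤ ENNReal.ofReal 3 := by
      refine (measure_mono hsub).trans ?_
      rw [Real.volume_Icc]; norm_num
    have heq : volume (A ∪ B) = volume A + volume B := measure_union hdisj hBmeas
    have : ENNReal.ofReal 4 ≤ ENNReal.ofReal (7/2) := by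
      calc ENNReal.ofReal 4 = ENNReal.ofReal 2 + ENNReal.ofReal 2 := by
            rw [← ENNReal.ofReal_add] <;> norm_num
      _ ≤ (volume A + ENNReal.ofReal (1/4)) + (volume B + ENNReal.ofReal (1/4)) := by
            rw [hμB]; exact add_le_add hμA hμA
      _ = (volume A + volume B) + (ENNReal.ofReal (1/4) + ENNReal.ofReal (1/4)) := by ring
      _ = volume (A ∪ B) + ENNReal.ofReal (1/2) := by
            rw [heq, ← ENNReal.ofReal_add] <;> norm_num
      _ ≤ ENNReal.ofReal 3 + ENNReal.ofReal (1/2) := add_le_add_left hle _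
      _ = ENNReal.ofReal (7/2) := by rw [← ENNReal.ofReal_add] <;> norm_num
    rw [ENNReal.ofReal_le_ofReal_iff (by norm_num)] at this
    norm_num at this
  obtain ⟨w, hwA, hwB⟩ := Set.not_disjoint_iff.mp hnotdisj
  have hw' : w - us n ∈ A := by
    have : w + (-(us n)) ∈ A := hwB
    simpa [sub_eq_add_neg] using this
  have h1 := (hsmall w hwA).1
  have h2 := (hsmall (w - us n) hw').2
  have hkey : xs n + us n + (w - us n) = xs n + w := by ring
  rw [hkey] at h2
  have := hgt n
  have habs := abs_sub_le (k (xs n + us n)) (k (xs n + w)) (k (xs n))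
  have h2' : |k (xs n + us n) - k (xs n + w)| < ε/2 := by
    rwa [abs_sub_comm]
  linarith
open MeasureTheory Set Filter

lemma chain_bound (k : ℝ → ℝ) {ε X : ℝ} (hε : 0 ≤ ε)
    (hX : ∀ x ≥ X, ∀ u ∈ Icc (0:ℝ) 1, |k (x + u) - k x| ≤ ε) :
    ∀ x y, X ≤ x → X ≤ y → |k y - k x| ≤ ε * |y - x| + ε := by
  have key : ∀ n : ℕ, ∀ x, X ≤ x → ∀ v, x ≤ v → v ≤ x + n + 1 → |k v - k x| ≤ (n + 1) * ε := by
    intro n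
    induction n with
    | zero =>
      intro x hx v hv1 hv2
      have := hX x hx (v - x) ⟨by linarith, by push_cast at hv2; linarith⟩
      rw [add_sub_cancel] at this
      push_cast; linarith
    | succ n ih =>
      intro x hx v hv1 hv2
      by_cases hc : v ≤ x + 1
      · have := hX x hx (v - x) ⟨by linarith, by linarith⟩
        rw [add_sub_cancel] at this
        have : |k v - k x| ≤ ε := this
        push_cast
        nlinarith [mul_nonneg (Nat.cast_nonneg (α := ℝ) n) hε]
      · push_neg at hc
        have h1 := hX x hx 1 ⟨zero_le_one, le_refl 1⟩
        have h2 := ih (x + 1) (by linarith) v (by linarith) (by push_cast at hv2 ⊢; linarith)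
        have habs := abs_sub_le (k v) (k (x + 1)) (k x)
        push_cast at h2 ⊢
        linarith
  -- symmetric version
  have half : ∀ x y, X ≤ x → X ≤ y → x ≤ y → |k y - k x| ≤ ε * (y - x) + ε := by
    intro x y hx hy hxy
    set n : ℕ := ⌊y - x⌋₊ with hn
    have h1 : (n : ℝ) ≤ y - x := Nat.floor_le (by linarith)
    have h2 : y - x < n + 1 := Nat.lt_floor_add_one _
    have := key n x hx y hxy (by linarith)
    have hε' : (n + 1 : ℝ) * ε ≤ (y - x + 1) * ε := by
      apply mul_le_mul_of_nonneg_right _ hε; linarith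
    calc |k y - k x| ≤ (n + 1) * ε := this
      _ ≤ (y - x + 1) * ε := hε'
      _ = ε * (y - x) + ε := by ring
  intro x y hx hy
  rcases le_total x y with h | h
  · rw [abs_of_nonneg (by linarith : (0:ℝ) ≤ y - x)]; exact half x y hx hy h
  · rw [abs_sub_comm, abs_of_nonpos (by linarith : y - x ≤ 0)]
    have := half y x hy hx h
    calc |k x - k y| ≤ ε * (x - y) + ε := this
      _ = ε * -(y - x) + ε := by ring

/-- Potter bounds for a positive measurable slowly varying function. -/
lemma potter (L : ℝ → ℝ) (hmeas : Measurable L) (hpos : ∀ x, 0 < L x)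
    (hslow : ∀ t > (0:ℝ), Tendsto (fun x => L (t * x) / L x) atTop (nhds 1))
    {ε : ℝ} (hε : 0 < ε) :
    ∃ X : ℝ, 1 ≤ X ∧ ∀ x y, X ≤ x → X ≤ y →
      L y ≤ Real.exp ε * (L x * max (y / x) (x / y) ^ ε) := by
  set k : ℝ → ℝ := fun u => Real.log (L (Real.exp u)) with hk
  have hkmeas : Measurable k := (hmeas.comp Real.measurable_exp).log
  have hkslow : ∀ s : ℝ, Tendsto (fun x => k (x + s) - k x) atTop (nhds 0) := by
    intro s
    have h1 : Tendsto (fun x : ℝ => L (Real.exp s * Real.exp x) / L (Real.exp x))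
        atTop (nhds 1) := (hslow (Real.exp s) (Real.exp_pos s)).comp Real.tendsto_exp_atTop
    have h2 : Tendsto (fun x : ℝ => Real.log (L (Real.exp s * Real.exp x) / L (Real.exp x)))
        atTop (nhds 0) := by
      have := (Real.continuousAt_log one_ne_zero).tendsto.comp h1
      simpa [Real.log_one, Function.comp_def] using this
    apply h2.congr
    intro x
    rw [Real.log_div (hpos _).ne' (hpos _).ne', ← Real.exp_add]
    simp [k, add_comm]
  obtain ⟨X', hX'⟩ := uct_additive k hkmeas hkslow hε
  refine ⟨max 1 (Real.exp X'), le_max_left _ _, ?_⟩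
  intro x y hx hy
  have hx1 : (1:ℝ) ≤ x := le_trans (le_max_left _ _) hx
  have hy1 : (1:ℝ) ≤ y := le_trans (le_max_left _ _) hy
  have hx0 : (0:ℝ) < x := by linarith
  have hy0 : (0:ℝ) < y := by linarith
  have hlx : X' ≤ Real.log x := by
    rw [← Real.log_exp X']
    exact Real.log_le_log (Real.exp_pos _) (le_trans (le_max_right _ _) hx)
  have hly : X' ≤ Real.log y := by
    rw [← Real.log_exp X']
    exact Real.log_le_log (Real.exp_pos _) (le_trans (le_max_right _ _) hy)
  have hbd := chain_bound k hε.le hX' (Real.log x) (Real.log y) hlx hly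
  have hkx : k (Real.log x) = Real.log (L x) := by simp [k, Real.exp_log hx0]
  have hky : k (Real.log y) = Real.log (L y) := by simp [k, Real.exp_log hy0]
  rw [hkx, hky] at hbd
  set M : ℝ := max (y / x) (x / y) with hM
  have hM1 : (1:ℝ) ≤ M := by
    rcases le_total x y with h | h
    · exact le_trans ((one_le_div hx0).mpr h) (le_max_left _ _)
    · exact le_trans ((one_le_div hy0).mpr h) (le_max_right _ _)
  have hM0 : (0:ℝ) < M := by linarith
  have habslog : |Real.log y - Real.log x| = Real.log M := by
    rcases le_total x y with h | h
    · have h1 : x / y ≤ 1 := (div_le_one hy0).mpr h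
      have h2 : (1:ℝ) ≤ y / x := (one_le_div hx0).mpr h
      rw [hM, max_eq_left (h1.trans h2),
        abs_of_nonneg (sub_nonneg.mpr (Real.log_le_log hx0 h)),
        ← Real.log_div hy0.ne' hx0.ne']
    · have h1 : y / x ≤ 1 := (div_le_one hx0).mpr h
      have h2 : (1:ℝ) ≤ x / y := (one_le_div hy0).mpr h
      rw [hM, max_eq_right (h1.trans h2), abs_sub_comm,
        abs_of_nonneg (sub_nonneg.mpr (Real.log_le_log hy0 h)),
        ← Real.log_div hx0.ne' hy0.ne']
  rw [habslog] at hbd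
  have hup : Real.log (L y) ≤ Real.log (L x) + ε * Real.log M + ε := by
    have := abs_le.mp hbd
    linarith [this.2]
  have := Real.exp_le_exp.mpr hup
  rw [Real.exp_log (hpos y)] at this
  calc L y ≤ Real.exp (Real.log (L x) + ε * Real.log M + ε) := this
    _ = Real.exp ε * (L x * M ^ ε) := by
        rw [Real.exp_add, Real.exp_add, Real.exp_log (hpos x),
          Real.rpow_def_of_pos hM0, mul_comm (Real.log M) ε]
        ring
open MeasureTheory Set Filter

lemma aux_int {a b : ℝ} (ha : -1 < a) (hab : a + b < -1) (hb : b ≤ 0) :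
    IntegrableOn (fun y : ℝ => y ^ a * (1 + y) ^ b) (Ioi 0) := by
  have hmeas : Measurable (fun y : ℝ => y ^ a * (1 + y) ^ b) := by fun_prop
  have h1 : IntegrableOn (fun y : ℝ => y ^ a * (1 + y) ^ b) (Ioc 0 1) := by
    have hint : IntegrableOn (fun y : ℝ => y ^ a) (Ioc 0 1) := by
      rw [integrableOn_Ioc_iff_integrableOn_Ioo]
      exact (intervalIntegral.integrableOn_Ioo_rpow_iff zero_lt_one).mpr ha
    apply Integrable.mono' hint hmeas.aestronglyMeasurable.restrict
    rw [ae_restrict_iff' measurableSet_Ioc]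
    refine Eventually.of_forall fun y hy => ?_
    have hy0 : (0:ℝ) < y := hy.1
    have h1y : (1:ℝ) ≤ 1 + y := by linarith
    have hb1 : (1 + y) ^ b ≤ 1 := Real.rpow_le_one_of_one_le_of_nonpos h1y hb
    have hpos : (0:ℝ) ≤ y ^ a := (Real.rpow_pos_of_pos hy0 a).le
    have hpos2 : (0:ℝ) ≤ (1 + y) ^ b := (Real.rpow_pos_of_pos (by linarith) b).le
    rw [Real.norm_eq_abs, abs_of_nonneg (mul_nonneg hpos hpos2)]
    calc y ^ a * (1 + y) ^ b ≤ y ^ a * 1 := by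
          exact mul_le_mul_of_nonneg_left hb1 hpos
      _ = y ^ a := mul_one _
  have h2 : IntegrableOn (fun y : ℝ => y ^ a * (1 + y) ^ b) (Ioi 1) := by
    have hint : IntegrableOn (fun y : ℝ => y ^ (a + b)) (Ioi 1) :=
      (integrableOn_Ioi_rpow_iff zero_lt_one).mpr hab
    apply Integrable.mono' hint hmeas.aestronglyMeasurable.restrict
    rw [ae_restrict_iff' measurableSet_Ioi]
    refine Eventually.of_forall fun y hy => ?_
    have hy0 : (0:ℝ) < y := lt_trans zero_lt_one hy
    have hpos : (0:ℝ) ≤ y ^ a := (Real.rpow_pos_of_pos hy0 a).le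
    have hpos2 : (0:ℝ) ≤ (1 + y) ^ b := (Real.rpow_pos_of_pos (by linarith) b).le
    rw [Real.norm_eq_abs, abs_of_nonneg (mul_nonneg hpos hpos2)]
    calc y ^ a * (1 + y) ^ b ≤ y ^ a * y ^ b := by
          apply mul_le_mul_of_nonneg_left _ hpos
          exact Real.rpow_le_rpow_of_nonpos hy0 (by linarith) hb
      _ = y ^ (a + b) := (Real.rpow_add hy0 a b).symm
  have : Ioc (0:ℝ) 1 ∪ Ioi 1 = Ioi 0 := Ioc_union_Ioi_eq_Ioi zero_le_one
  rw [← this]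
  exact h1.union h2

set_option maxHeartbeats 2000000

/-- Proposition (long-run asymptotics, case γ ∈ (1/2,1)): if `g(x) = x^(-γ) L₁(x)` for `x > 1`
with `L₁` slowly varying at infinity, then
`∫₀^∞ g(x) g(x+h) dx ~ (∫₀^∞ y^(-γ)(1+y)^(-γ) dy) · L₁(h)² · h^(1-2γ)` as `h → ∞`. -/
theorem bss_acf_long_memory_asymptotics
    (γ : ℝ) (hγ : γ ∈ Ioo (1/2 : ℝ) 1)
    (g L₁ : ℝ → ℝ)
    (hg_meas : Measurable g)
    (hg_nonneg : ∀ x ∈ Ioi (0:ℝ), 0 ≤ g x)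
    (hg_int01 : IntegrableOn g (Ioc 0 1))
    (hform : ∀ x > (1:ℝ), g x = x ^ (-γ) * L₁ x)
    (hL₁_slow : ∀ t > (0:ℝ), Tendsto (fun x => L₁ (t * x) / L₁ x) atTop (nhds 1))
    (hL₁_bdd : ∀ T ≥ (1:ℝ), ∃ c Cu : ℝ, 0 < c ∧ ∀ x ∈ Icc (1:ℝ) T, c ≤ L₁ x ∧ L₁ x ≤ Cu) :
    Tendsto
      (fun h => (∫ x in Ioi (0:ℝ), g x * g (x + h)) /
        ((∫ y in Ioi (0:ℝ), y ^ (-γ) * (1 + y) ^ (-γ)) * (L₁ h) ^ 2 * h ^ (1 - 2 * γ)))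
      atTop (nhds 1) := by
  obtain ⟨hγ1, hγ2⟩ := hγ
  -- modified slowly varying function, positive and measurable everywhere
  set L : ℝ → ℝ := fun x => if 1 < x then g x * x ^ γ else 1 with hLdef
  have hL_eq : ∀ x, 1 < x → L x = L₁ x := by
    intro x hx
    have hx0 : (0:ℝ) < x := lt_trans zero_lt_one hx
    rw [hLdef]
    simp only [if_pos hx, hform x hx]
    rw [mul_comm (x ^ (-γ)) (L₁ x), mul_assoc, ← Real.rpow_add hx0]
    simp
  have hL_meas : Measurable L := by
    apply Measurable.ite (measurableSet_lt measurable_const measurable_id)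
    · fun_prop
    · exact measurable_const
  have hL₁_pos : ∀ x, 1 ≤ x → 0 < L₁ x := by
    intro x hx
    obtain ⟨c, Cu, hc, hb⟩ := hL₁_bdd x hx
    exact lt_of_lt_of_le hc (hb x ⟨hx, le_rfl⟩).1
  have hL_pos : ∀ x, 0 < L x := by
    intro x
    rw [hLdef]
    by_cases hx : 1 < x
    · simp only [if_pos hx]
      have := hL₁_pos x hx.le
      rw [hform x hx]
      positivity
    · simp [if_neg hx]
  have hL_slow : ∀ t > (0:ℝ), Tendsto (fun x => L (t * x) / L x) atTop (nhds 1) := by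
    intro t ht
    apply (hL₁_slow t ht).congr'
    filter_upwards [eventually_gt_atTop 1, eventually_gt_atTop t⁻¹] with x hx1 hx2
    have htx : 1 < t * x := by
      have := (div_lt_iff₀ ht).mp (by rwa [div_eq_inv_mul, mul_one] : 1 / t < x)
      linarith [mul_comm x t]
    rw [hL_eq _ hx1, hL_eq _ htx]
  -- choice of small ε
  set ε : ℝ := min (1 - γ) (2*γ - 1) / 4 with hεdef
  have hε : 0 < ε := by
    rw [hεdef]
    have h1 : (0:ℝ) < 1 - γ := by linarith
    have h2 : (0:ℝ) < 2*γ - 1 := by linarith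
    positivity
  have hε1 : γ + ε < 1 := by
    have : ε ≤ (1 - γ)/4 := by rw [hεdef]; gcongr; exact min_le_left _ _
    linarith
  have hε2 : 1 < 2*γ - 2*ε := by
    have : ε ≤ (2*γ - 1)/4 := by rw [hεdef]; gcongr; exact min_le_right _ _
    linarith
  have hεγ : ε ≤ γ := by linarith
  -- Potter bounds
  obtain ⟨X, hX1, hpot⟩ := potter L hL_meas hL_pos hL_slow hε
  have hX0 : (0:ℝ) < X := lt_of_lt_of_le zero_lt_one hX1
  -- lower Potter bound
  set c₁ : ℝ := Real.exp (-ε) * L X * X ^ ε with hc₁def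
  have hc₁ : 0 < c₁ := by
    have := hL_pos X
    have := Real.rpow_pos_of_pos hX0 ε
    positivity
  have hlow : ∀ b, X ≤ b → c₁ * b ^ (-ε) ≤ L b := by
    intro b hb
    have hb0 : (0:ℝ) < b := lt_of_lt_of_le hX0 hb
    have h := hpot b X hb le_rfl
    have hmax : max (X / b) (b / X) = b / X := by
      apply max_eq_right
      calc X / b ≤ 1 := (div_le_one hb0).mpr hb
        _ ≤ b / X := (one_le_div hX0).mpr hb
    rw [hmax, Real.div_rpow hb0.le hX0.le] at h
    have hP : (0:ℝ) < b ^ ε := Real.rpow_pos_of_pos hb0 _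
    have hR : (0:ℝ) < X ^ ε := Real.rpow_pos_of_pos hX0 _
    have hbinv : b ^ (-ε) = (b ^ ε)⁻¹ := by
      rw [Real.rpow_neg hb0.le]
    have hE : (0:ℝ) < Real.exp ε := Real.exp_pos _
    rw [hc₁def, Real.exp_neg, hbinv]
    calc (Real.exp ε)⁻¹ * L X * X ^ ε * (b ^ ε)⁻¹
        = L X * ((Real.exp ε)⁻¹ * X ^ ε * (b ^ ε)⁻¹) := by ring
      _ ≤ (Real.exp ε * (L b * (b ^ ε / X ^ ε))) * ((Real.exp ε)⁻¹ * X ^ ε * (b ^ ε)⁻¹) := by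
          apply mul_le_mul_of_nonneg_right h
          positivity
      _ = L b := by field_simp
  -- upper bound on [1, X]
  obtain ⟨c₀, Cu₀, hc₀, hb₀⟩ := hL₁_bdd X hX1
  set Cu : ℝ := max Cu₀ 1 with hCudef
  have hCu0 : (0:ℝ) < Cu := lt_of_lt_of_le zero_lt_one (le_max_right _ _)
  have hCu : ∀ x ∈ Icc (1:ℝ) X, L x ≤ Cu := by
    intro x hx
    by_cases h1 : 1 < x
    · rw [hL_eq x h1]
      exact le_trans (hb₀ x hx).2 (le_max_left _ _)
    · rw [hLdef]; simp only [if_neg h1]; exact le_max_right _ _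
  -- the limit integrand and its integral
  set φ : ℝ → ℝ := fun y => y ^ (-γ) * (1 + y) ^ (-γ) with hφdef
  have hφ_meas : Measurable φ := by rw [hφdef]; fun_prop
  have hφ_nonneg : ∀ y : ℝ, 0 < y → 0 ≤ φ y := by
    intro y hy
    have h1 : (0:ℝ) < 1 + y := by linarith
    rw [hφdef]
    positivity
  have hφ_int : IntegrableOn φ (Ioi 0) := by
    exact aux_int (by linarith) (by linarith) (by linarith)
  set C : ℝ := ∫ y in Ioi (0:ℝ), y ^ (-γ) * (1 + y) ^ (-γ) with hCdef
  have hCphi : ∫ y in Ioi (0:ℝ), φ y = C := rfl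
  have hC_pos : 0 < C := by
    rw [← hCphi]
    rw [setIntegral_pos_iff_support_of_nonneg_ae]
    · have hsub : Ioi (0:ℝ) ⊆ Function.support φ ∩ Ioi 0 := by
        intro y hy
        refine ⟨?_, hy⟩
        have hy0 : (0:ℝ) < y := hy
        have h1 : (0:ℝ) < 1 + y := by linarith
        have : 0 < φ y := by rw [hφdef]; positivity
        exact this.ne'
      calc (0:ENNReal) < volume (Ioi (0:ℝ)) := by simp [Real.volume_Ioi]
        _ ≤ volume (Function.support φ ∩ Ioi 0) := measure_mono hsub
    · rw [EventuallyLE, ae_restrict_iff' measurableSet_Ioi]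
      exact Eventually.of_forall (fun y hy => hφ_nonneg y hy)
    · exact hφ_int
  -- the dominating function
  set K : ℝ := Real.exp ε * max (Real.exp ε) (Cu * X ^ ε / c₁) with hKdef
  have hK0 : 0 < K := by
    have h1 : (0:ℝ) < Real.exp ε := Real.exp_pos _
    have h2 : Real.exp ε ≤ max (Real.exp ε) (Cu * X ^ ε / c₁) := le_max_left _ _
    rw [hKdef]; nlinarith
  set G : ℝ → ℝ := fun y => K * (φ y * ((y ^ (-ε) + y ^ ε) * (1 + y) ^ ε)) with hGdef
  have hG_nonneg : ∀ y : ℝ, 0 < y → 0 ≤ G y := by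
    intro y hy
    have h1 : (0:ℝ) < 1 + y := by linarith
    have := hφ_nonneg y hy
    rw [hGdef]
    positivity
  have hG_int : IntegrableOn G (Ioi 0) := by
    have hint : IntegrableOn (fun y : ℝ =>
        K * (y ^ (-γ - ε) * (1 + y) ^ (ε - γ) + y ^ (-γ + ε) * (1 + y) ^ (ε - γ))) (Ioi 0) := by
      apply Integrable.const_mul
      apply Integrable.add
      · exact aux_int (by linarith) (by linarith) (by linarith)
      · exact aux_int (by linarith) (by linarith) (by linarith)
    apply hint.congr
    rw [EventuallyEq, ae_restrict_iff' measurableSet_Ioi]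
    apply Eventually.of_forall
    intro y hy
    have hy0 : (0:ℝ) < y := hy
    have h1 : (0:ℝ) < 1 + y := by linarith
    rw [hGdef, hφdef]
    simp only
    rw [show (-γ - ε) = -γ + -ε by ring, show (-γ + ε) = -γ + ε by ring,
      show (ε - γ) = -γ + ε by ring, Real.rpow_add hy0, Real.rpow_add hy0,
      Real.rpow_add h1]
    ring
  -- pointwise bound on the ratio of slowly varying factors
  have hQ : ∀ h : ℝ, X ≤ h → ∀ y : ℝ, 1/h < y →
      L (h*y) * L (h*y + h) / L h ^ 2 ≤ K * ((y ^ (-ε) + y ^ ε) * (1 + y) ^ ε) := by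
    intro h hh y hy
    have hh0 : (0:ℝ) < h := lt_of_lt_of_le hX0 hh
    have hy0 : (0:ℝ) < y := lt_trans (by positivity) hy
    have hhy1 : 1 < h * y := by
      rw [div_lt_iff₀ hh0] at hy
      nlinarith
    have h1y : (0:ℝ) < 1 + y := by linarith
    have hLh := hL_pos h
    -- factor A
    have hA : L (h*y + h) / L h ≤ Real.exp ε * (1 + y) ^ ε := by
      rw [div_le_iff₀ hLh]
      have hXhy : X ≤ h * (1 + y) := by nlinarith
      have := hpot h (h * (1+y)) hh hXhy
      have hmax : max ((h * (1+y)) / h) (h / (h * (1+y))) = 1 + y := by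
        rw [mul_div_cancel_left₀ _ hh0.ne', max_eq_left]
        calc h / (h * (1 + y)) ≤ 1 := by
              rw [div_le_one (by positivity)]; nlinarith
          _ ≤ 1 + y := by linarith
      rw [hmax] at this
      calc L (h*y + h) = L (h * (1+y)) := by ring_nf
        _ ≤ Real.exp ε * (L h * (1+y) ^ ε) := this
        _ = Real.exp ε * (1+y) ^ ε * L h := by ring
    -- factor B
    have hB : L (h*y) / L h ≤ max (Real.exp ε) (Cu * X ^ ε / c₁) * (y ^ (-ε) + y ^ ε) := by
      have hyε : (0:ℝ) < y ^ ε := Real.rpow_pos_of_pos hy0 _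
      have hynε : (0:ℝ) < y ^ (-ε) := Real.rpow_pos_of_pos hy0 _
      rcases le_or_gt X (h * y) with hc | hc
      · -- Potter case
        have := hpot h (h * y) hh hc
        have hmax : max ((h*y)/h) (h/(h*y)) = max y y⁻¹ := by
          congr 1
          · rw [mul_div_cancel_left₀ _ hh0.ne']
          · rw [div_mul_eq_div_div, div_self hh0.ne', one_div]
        rw [hmax] at this
        have hmaxpow : (max y y⁻¹) ^ ε ≤ y ^ (-ε) + y ^ ε := by
          rcases le_total y y⁻¹ with hm | hm
          · rw [max_eq_right hm, Real.inv_rpow hy0.le, ← Real.rpow_neg hy0.le]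
            linarith
          · rw [max_eq_left hm]
            have : (0:ℝ) < y ^ ε := hyε
            rw [show y ^ ε = y ^ ε from rfl] -- no-op
            have hyy : y ^ ε ≤ y ^ ε := le_rfl
            linarith
        rw [div_le_iff₀ hLh]
        calc L (h*y) ≤ Real.exp ε * (L h * (max y y⁻¹) ^ ε) := this
          _ ≤ Real.exp ε * (L h * (y ^ (-ε) + y ^ ε)) := by
              apply mul_le_mul_of_nonneg_left _ (Real.exp_pos ε).le
              exact mul_le_mul_of_nonneg_left hmaxpow hLh.le
          _ = Real.exp ε * (y ^ (-ε) + y ^ ε) * L h := by ring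
          _ ≤ max (Real.exp ε) (Cu * X ^ ε / c₁) * (y ^ (-ε) + y ^ ε) * L h := by
              apply mul_le_mul_of_nonneg_right _ hLh.le
              apply mul_le_mul_of_nonneg_right (le_max_left _ _) (by positivity)
      · -- bounded case
        have hhy : h * y ∈ Icc (1:ℝ) X := ⟨hhy1.le, hc.le⟩
        have hub : L (h*y) ≤ Cu := hCu _ hhy
        have hlb : c₁ * h ^ (-ε) ≤ L h := hlow h hh
        have hhe : (0:ℝ) < h ^ (-ε) := Real.rpow_pos_of_pos hh0 _
        have hstep : L (h*y) / L h ≤ Cu / (c₁ * h ^ (-ε)) := by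
          apply div_le_div₀ (le_of_lt hCu0) hub (by positivity) hlb
        have hstep2 : Cu / (c₁ * h ^ (-ε)) = (Cu / c₁) * h ^ ε := by
          rw [Real.rpow_neg hh0.le]
          field_simp
        have hh_lt : h ≤ X / y := by
          rw [le_div_iff₀ hy0]; linarith
        have hstep3 : h ^ ε ≤ X ^ ε * y ^ (-ε) := by
          calc h ^ ε ≤ (X / y) ^ ε := Real.rpow_le_rpow hh0.le hh_lt hε.le
            _ = X ^ ε * y ^ (-ε) := by
                rw [Real.div_rpow hX0.le hy0.le, Real.rpow_neg hy0.le, div_eq_mul_inv]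
        calc L (h*y) / L h ≤ (Cu / c₁) * h ^ ε := by rw [← hstep2]; exact hstep
          _ ≤ (Cu / c₁) * (X ^ ε * y ^ (-ε)) := by
              apply mul_le_mul_of_nonneg_left hstep3 (by positivity)
          _ = (Cu * X ^ ε / c₁) * y ^ (-ε) := by ring
          _ ≤ max (Real.exp ε) (Cu * X ^ ε / c₁) * (y ^ (-ε) + y ^ ε) := by
              apply mul_le_mul (le_max_right _ _) (by linarith) hynε.le
              positivity
    -- combine
    have hcomb : L (h*y) * L (h*y + h) / L h ^ 2 = (L (h*y) / L h) * (L (h*y + h) / L h) := by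
      rw [pow_two]; exact (div_mul_div_comm _ _ _ _).symm
    rw [hcomb, hKdef]
    have hA0 : 0 ≤ L (h*y + h) / L h := div_nonneg (hL_pos _).le hLh.le
    have hB0 : 0 ≤ L (h*y) / L h := div_nonneg (hL_pos _).le hLh.le
    calc (L (h*y) / L h) * (L (h*y + h) / L h)
        ≤ (max (Real.exp ε) (Cu * X ^ ε / c₁) * (y ^ (-ε) + y ^ ε)) *
          (Real.exp ε * (1 + y) ^ ε) := by
          apply mul_le_mul hB hA hA0
          have hyε : (0:ℝ) < y ^ ε := Real.rpow_pos_of_pos hy0 _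
          have hynε : (0:ℝ) < y ^ (-ε) := Real.rpow_pos_of_pos hy0 _
          positivity
      _ = Real.exp ε * max (Real.exp ε) (Cu * X ^ ε / c₁) * ((y ^ (-ε) + y ^ ε) * (1 + y) ^ ε) := by
          ring
  -- family of integrands for dominated convergence
  set F : ℝ → ℝ → ℝ := fun h y =>
    (Ioi (1/h)).indicator (fun y => φ y * (L (h*y) * L (h*y + h) / L h ^ 2)) y with hFdef
  have hF_meas : ∀ h : ℝ, Measurable (F h) := by
    intro h
    apply Measurable.indicator _ measurableSet_Ioi
    apply hφ_meas.mul
    apply Measurable.div_const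
    exact (hL_meas.comp (measurable_id.const_mul h)).mul
      (hL_meas.comp ((measurable_id.const_mul h).add_const h))
  have hF_nonneg : ∀ h : ℝ, ∀ y : ℝ, 0 < y → 0 ≤ F h y := by
    intro h y hy0
    simp only [hFdef]
    by_cases hmem : y ∈ Ioi (1/h)
    · simp only [indicator_of_mem hmem]
      have p1 := hL_pos (h*y); have p2 := hL_pos (h*y+h); have p3 := hL_pos h
      have := hφ_nonneg y hy0
      positivity
    · rw [indicator_of_notMem hmem]
  have hF_bound : ∀ h : ℝ, X ≤ h → ∀ y : ℝ, 0 < y → F h y ≤ G y := by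
    intro h hh y hy0
    simp only [hFdef]
    by_cases hmem : y ∈ Ioi (1/h)
    · simp only [indicator_of_mem hmem]
      have hQy := hQ h hh y hmem
      rw [hGdef]
      calc φ y * (L (h*y) * L (h*y + h) / L h ^ 2)
          ≤ φ y * (K * ((y ^ (-ε) + y ^ ε) * (1+y) ^ ε)) :=
            mul_le_mul_of_nonneg_left hQy (hφ_nonneg y hy0)
        _ = K * (φ y * ((y ^ (-ε) + y ^ ε) * (1+y) ^ ε)) := by ring
    · simp only [indicator_of_notMem hmem]
      exact hG_nonneg y hy0
  have hS : Tendsto (fun h => ∫ y in Ioi (0:ℝ), F h y) atTop (nhds C) := by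
    rw [← hCphi]
    apply tendsto_integral_filter_of_dominated_convergence G
    · exact Eventually.of_forall (fun h => (hF_meas h).aestronglyMeasurable)
    · filter_upwards [eventually_ge_atTop X] with h hh
      rw [ae_restrict_iff' measurableSet_Ioi]
      apply Eventually.of_forall
      intro y hy
      have hy0 : (0:ℝ) < y := hy
      rw [Real.norm_eq_abs, abs_of_nonneg (hF_nonneg h y hy0)]
      exact hF_bound h hh y hy0
    · exact hG_int
    · rw [ae_restrict_iff' measurableSet_Ioi]
      apply Eventually.of_forall
      intro y hy
      have hy0 : (0:ℝ) < y := hy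
      have h1y : (0:ℝ) < 1 + y := by linarith
      have ht1 : Tendsto (fun h : ℝ => L (y * h) / L h) atTop (nhds 1) := hL_slow y hy0
      have ht2 : Tendsto (fun h : ℝ => L ((1+y) * h) / L h) atTop (nhds 1) := hL_slow (1+y) h1y
      have ht : Tendsto (fun h : ℝ => φ y * (L (h*y) * L (h*y + h) / L h ^ 2)) atTop
          (nhds (φ y)) := by
        have hmul := (ht1.mul ht2).const_mul (φ y)
        rw [mul_one, mul_one] at hmul
        apply hmul.congr
        intro h
        rw [mul_comm y h, show (1+y) * h = h*y + h by ring, pow_two,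
          div_mul_div_comm]
      apply Tendsto.congr' _ ht
      filter_upwards [eventually_gt_atTop (max X (1/y))] with h hh
      have h1yh : 1/y < h := lt_of_le_of_lt (le_max_right X (1/y)) hh
      have hh0 : (0:ℝ) < h := lt_trans (by positivity) h1yh
      have hmem : y ∈ Ioi (1/h) := by
        rw [mem_Ioi, div_lt_iff₀ hh0]
        have := mul_lt_mul_of_pos_left h1yh hy0
        rwa [mul_one_div_cancel hy0.ne'] at this
      simp only [hFdef]
      simp only [indicator_of_mem hmem]
  -- change of variables identity for the tail integral
  have key₂ : ∀ h : ℝ, X ≤ h → 1 < h → IntegrableOn (fun x => g x * g (x+h)) (Ioi 1) ∧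
      (∫ x in Ioi 1, g x * g (x+h)) = h ^ (1-2*γ) * L h ^ 2 * ∫ y in Ioi (0:ℝ), F h y := by
    intro h hh h1
    have hh0 : (0:ℝ) < h := by linarith
    have hinv0 : (0:ℝ) < 1/h := by positivity
    have hrestrict : (volume.restrict (Ioi (0:ℝ))).restrict (Ioi (1/h)) =
        volume.restrict (Ioi (1/h)) := by
      rw [Measure.restrict_restrict measurableSet_Ioi]
      congr 1
      rw [Ioi_inter_Ioi, sup_eq_left.mpr hinv0.le]
    have hFint_eq : ∫ y in Ioi (0:ℝ), F h y =
        ∫ y in Ioi (1/h), φ y * (L (h*y) * L (h*y + h) / L h ^ 2) := by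
      simp only [hFdef]
      rw [integral_indicator measurableSet_Ioi, hrestrict]
    have hFint : Integrable (F h) (volume.restrict (Ioi 0)) := by
      apply Integrable.mono' hG_int (hF_meas h).aestronglyMeasurable
      rw [ae_restrict_iff' measurableSet_Ioi]
      apply Eventually.of_forall
      intro y hy
      have hy0 : (0:ℝ) < y := hy
      rw [Real.norm_eq_abs, abs_of_nonneg (hF_nonneg h y hy0)]
      exact hF_bound h hh y hy0
    have hinner_int : IntegrableOn (fun y => φ y * (L (h*y) * L (h*y + h) / L h ^ 2))
        (Ioi (1/h)) := by
      have h2 := (integrable_indicator_iff (measurableSet_Ioi (a := 1/h))).mp hFint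
      rwa [IntegrableOn, hrestrict] at h2
    have hptw : ∀ y ∈ Ioi (1/h), g (h*y) * g (h*y + h) =
        (h ^ (-(2*γ)) * L h ^ 2) * (φ y * (L (h*y) * L (h*y + h) / L h ^ 2)) := by
      intro y hy
      have hy0 : (0:ℝ) < y := lt_trans hinv0 hy
      have hhy1 : (1:ℝ) < h*y := by
        have := hy
        rw [mem_Ioi, div_lt_iff₀ hh0] at this
        nlinarith
      have hhyh1 : (1:ℝ) < h*y + h := by nlinarith
      have h1y : (0:ℝ) < 1+y := by linarith
      rw [hform _ hhy1, hform _ hhyh1, ← hL_eq _ hhy1, ← hL_eq _ hhyh1]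
      have e1 : (h*y) ^ (-γ) = h ^ (-γ) * y ^ (-γ) := Real.mul_rpow hh0.le hy0.le
      have e2 : (h*y + h) ^ (-γ) = h ^ (-γ) * (1+y) ^ (-γ) := by
        rw [show h*y + h = h * (1+y) by ring, Real.mul_rpow hh0.le h1y.le]
      have e3 : h ^ (-(2*γ)) = h ^ (-γ) * h ^ (-γ) := by
        rw [← Real.rpow_add hh0]; ring_nf
      have hL2 : L h ^ 2 ≠ 0 := (pow_pos (hL_pos h) 2).ne'
      rw [e1, e2, e3, hφdef]
      field_simp
      ring_nf; rw [mul_inv_cancel_right₀ (hL_pos h).ne']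
    have hcv := integral_comp_mul_left_Ioi (fun x => g x * g (x + h)) (1/h) hh0
    rw [mul_one_div_cancel hh0.ne'] at hcv
    have hcomp_int : IntegrableOn (fun y => g (h*y) * g (h*y + h)) (Ioi (1/h)) := by
      have hbase : IntegrableOn
          (fun y => (h ^ (-(2*γ)) * L h ^ 2) * (φ y * (L (h*y) * L (h*y + h) / L h ^ 2)))
          (Ioi (1/h)) := hinner_int.const_mul _
      apply hbase.congr
      rw [EventuallyEq, ae_restrict_iff' measurableSet_Ioi]
      exact Eventually.of_forall (fun y hy => (hptw y hy).symm)
    have hint1 : IntegrableOn (fun x => g x * g (x+h)) (Ioi 1) := by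
      have := (integrableOn_Ioi_comp_mul_left_iff (fun x => g x * g (x + h)) (1/h) hh0).mp
        hcomp_int
      rwa [mul_one_div_cancel hh0.ne'] at this
    refine ⟨hint1, ?_⟩
    have step1 : ∫ x in Ioi (1:ℝ), g x * g (x+h) =
        h * ∫ y in Ioi (1/h), g (h*y) * g (h*y + h) := by
      rw [hcv, smul_eq_mul, ← mul_assoc, mul_inv_cancel₀ hh0.ne', one_mul]
    have step2 : ∫ y in Ioi (1/h), g (h*y) * g (h*y + h) =
        (h ^ (-(2*γ)) * L h ^ 2) * ∫ y in Ioi (1/h), φ y * (L (h*y) * L (h*y + h) / L h ^ 2) := by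
      rw [setIntegral_congr_fun measurableSet_Ioi (fun y hy => hptw y hy), integral_const_mul]
    have e4 : h * h ^ (-(2*γ)) = h ^ (1 - 2*γ) := by
      nth_rewrite 1 [← Real.rpow_one h]
      rw [← Real.rpow_add hh0]; ring_nf
    rw [step1, step2, hFint_eq, ← mul_assoc, ← mul_assoc, e4]
  -- the boundary part over (0,1]
  have hg01_nonneg : 0 ≤ ∫ x in Ioc (0:ℝ) 1, g x :=
    setIntegral_nonneg measurableSet_Ioc (fun x hx => hg_nonneg x hx.1)
  set B : ℝ := Real.exp ε * 2 ^ ε * ∫ x in Ioc (0:ℝ) 1, g x with hBdef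
  have hB0 : 0 ≤ B := by
    have h2e : (0:ℝ) < 2 ^ ε := Real.rpow_pos_of_pos two_pos ε
    have he : (0:ℝ) < Real.exp ε := Real.exp_pos ε
    rw [hBdef]; positivity
  have key₁ : ∀ h : ℝ, X ≤ h → 1 < h → IntegrableOn (fun x => g x * g (x+h)) (Ioc 0 1) ∧
      0 ≤ (∫ x in Ioc (0:ℝ) 1, g x * g (x+h)) ∧
      (∫ x in Ioc (0:ℝ) 1, g x * g (x+h)) ≤ B * (L h * h ^ (-γ)) := by
    intro h hh h1
    have hh0 : (0:ℝ) < h := by linarith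
    set D : ℝ := Real.exp ε * 2 ^ ε * (L h * h ^ (-γ)) with hDdef
    have hLh := hL_pos h
    have hhγ : (0:ℝ) < h ^ (-γ) := Real.rpow_pos_of_pos hh0 _
    have h2e : (0:ℝ) < 2 ^ ε := Real.rpow_pos_of_pos two_pos ε
    have he : (0:ℝ) < Real.exp ε := Real.exp_pos ε
    have hD0 : 0 ≤ D := by rw [hDdef]; positivity
    have hgb : ∀ x ∈ Ioc (0:ℝ) 1, g (x + h) ≤ D := by
      intro x hx
      have hx0 := hx.1
      have hx1 := hx.2
      have hxh1 : (1:ℝ) < x + h := by linarith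
      rw [hform _ hxh1, ← hL_eq _ hxh1]
      have hb1 : (x+h) ^ (-γ) ≤ h ^ (-γ) :=
        Real.rpow_le_rpow_of_nonpos hh0 (by linarith) (by linarith)
      have hb2 : L (x+h) ≤ Real.exp ε * (2 ^ ε * L h) := by
        have hp := hpot h (x+h) hh (by linarith)
        have hmax : max ((x+h)/h) (h/(x+h)) ≤ 2 := by
          apply max_le
          · rw [div_le_iff₀ hh0]; linarith
          · rw [div_le_iff₀ (by linarith : (0:ℝ) < x + h)]; linarith
        have hmax0 : (0:ℝ) ≤ max ((x+h)/h) (h/(x+h)) :=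
          le_trans (by positivity) (le_max_left ((x+h)/h) (h/(x+h)))
        have hmp : (max ((x+h)/h) (h/(x+h))) ^ ε ≤ 2 ^ ε :=
          Real.rpow_le_rpow hmax0 hmax hε.le
        calc L (x+h) ≤ Real.exp ε * (L h * (max ((x+h)/h) (h/(x+h))) ^ ε) := hp
          _ ≤ Real.exp ε * (L h * 2 ^ ε) := by
              apply mul_le_mul_of_nonneg_left _ he.le
              exact mul_le_mul_of_nonneg_left hmp hLh.le
          _ = Real.exp ε * (2 ^ ε * L h) := by ring
      calc (x+h) ^ (-γ) * L (x+h) ≤ h ^ (-γ) * (Real.exp ε * (2 ^ ε * L h)) := by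
            apply mul_le_mul hb1 hb2 (hL_pos _).le hhγ.le
        _ = D := by rw [hDdef]; ring
    have hprod_le : ∀ x ∈ Ioc (0:ℝ) 1, g x * g (x+h) ≤ D * g x := by
      intro x hx
      have hgx := hg_nonneg x hx.1
      calc g x * g (x+h) ≤ g x * D := mul_le_mul_of_nonneg_left (hgb x hx) hgx
        _ = D * g x := mul_comm _ _
    have hint : IntegrableOn (fun x => g x * g (x+h)) (Ioc 0 1) := by
      apply Integrable.mono' (hg_int01.const_mul D)
      · exact (hg_meas.mul (hg_meas.comp (measurable_id.add_const h))).aestronglyMeasurable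
      · rw [ae_restrict_iff' measurableSet_Ioc]
        apply Eventually.of_forall
        intro x hx
        have hgx := hg_nonneg x hx.1
        have hgxh := hg_nonneg (x+h) (by simp only [mem_Ioi]; have := hx.1; linarith)
        rw [Real.norm_eq_abs, abs_of_nonneg (mul_nonneg hgx hgxh)]
        exact hprod_le x hx
    refine ⟨hint, ?_, ?_⟩
    · apply setIntegral_nonneg measurableSet_Ioc
      intro x hx
      exact mul_nonneg (hg_nonneg x hx.1)
        (hg_nonneg (x+h) (by simp only [mem_Ioi]; have := hx.1; linarith))
    · calc ∫ x in Ioc (0:ℝ) 1, g x * g (x+h) ≤ ∫ x in Ioc (0:ℝ) 1, D * g x :=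
            setIntegral_mono_on hint (hg_int01.const_mul D) measurableSet_Ioc hprod_le
        _ = D * ∫ x in Ioc (0:ℝ) 1, g x := integral_const_mul _ _
        _ = B * (L h * h ^ (-γ)) := by rw [hDdef, hBdef]; ring
  -- the boundary part ratio tends to 0
  set δ : ℝ := 1 - γ - ε with hδdef
  have hδ0 : 0 < δ := by rw [hδdef]; linarith
  have hI₁ : Tendsto (fun h => (∫ x in Ioc (0:ℝ) 1, g x * g (x+h)) /
      (C * L h ^ 2 * h ^ (1-2*γ))) atTop (nhds 0) := by
    have hup : Tendsto (fun h : ℝ => (B/(C*c₁)) * h ^ (-δ)) atTop (nhds 0) := by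
      have := (tendsto_rpow_neg_atTop hδ0).const_mul (B/(C*c₁))
      rwa [mul_zero] at this
    apply tendsto_of_tendsto_of_tendsto_of_le_of_le' tendsto_const_nhds hup
    · filter_upwards [eventually_ge_atTop X, eventually_gt_atTop 1] with h hh h1
      obtain ⟨_, hnn, _⟩ := key₁ h hh h1
      have hh0 : (0:ℝ) < h := by linarith
      have hden : 0 < C * L h ^ 2 * h ^ (1-2*γ) := by
        have := hL_pos h
        have := Real.rpow_pos_of_pos hh0 (1-2*γ)
        positivity
      exact div_nonneg hnn hden.le
    · filter_upwards [eventually_ge_atTop X, eventually_gt_atTop 1] with h hh h1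
      obtain ⟨_, _, hub⟩ := key₁ h hh h1
      have hh0 : (0:ℝ) < h := by linarith
      have hLh := hL_pos h
      have hden : 0 < C * L h ^ 2 * h ^ (1-2*γ) := by
        have := Real.rpow_pos_of_pos hh0 (1-2*γ)
        positivity
      rw [div_le_iff₀ hden]
      have e1 : h ^ (-δ) * h ^ (1 - 2*γ) = h ^ (ε - γ) := by
        rw [← Real.rpow_add hh0, hδdef]; ring_nf
      have e2 : h ^ (ε - γ) * h ^ (-ε) = h ^ (-γ) := by
        rw [← Real.rpow_add hh0]; ring_nf
      have hlb := hlow h hh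
      have P : B * (L h * h ^ (-γ)) ≤ B/c₁ * (L h * L h) * h ^ (ε - γ) := by
        have hnn : 0 ≤ B/c₁ * L h * h ^ (ε - γ) := by
          have := Real.rpow_pos_of_pos hh0 (ε - γ)
          have := div_nonneg hB0 hc₁.le
          positivity
        have hmul := mul_le_mul_of_nonneg_left hlb hnn
        calc B * (L h * h ^ (-γ)) = B/c₁ * L h * h ^ (ε - γ) * (c₁ * h ^ (-ε)) := by
              rw [← e2]; field_simp
          _ ≤ B/c₁ * L h * h ^ (ε - γ) * L h := hmul
          _ = B/c₁ * (L h * L h) * h ^ (ε - γ) := by ring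
      calc ∫ x in Ioc (0:ℝ) 1, g x * g (x+h) ≤ B * (L h * h ^ (-γ)) := hub
        _ ≤ B/c₁ * (L h * L h) * h ^ (ε - γ) := P
        _ = B/(C*c₁) * h ^ (-δ) * (C * L h ^ 2 * h ^ (1-2*γ)) := by
            rw [show C * L h ^ 2 * h ^ (1-2*γ) = C * (L h * L h) * h ^ (1-2*γ) by ring]
            rw [show B/(C*c₁) * h ^ (-δ) * (C * (L h * L h) * h ^ (1-2*γ))
              = B/(C*c₁) * C * (L h * L h) * (h ^ (-δ) * h ^ (1-2*γ)) by ring, e1]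
            field_simp
  -- final assembly
  have hmain : Tendsto (fun h => (∫ x in Ioc (0:ℝ) 1, g x * g (x+h)) /
      (C * L h ^ 2 * h ^ (1-2*γ)) + (∫ y in Ioi (0:ℝ), F h y) / C) atTop (nhds 1) := by
    have := hI₁.add (hS.div_const C)
    rwa [zero_add, div_self hC_pos.ne'] at this
  apply hmain.congr'
  filter_upwards [eventually_ge_atTop X, eventually_gt_atTop 1] with h hh h1
  have hh0 : (0:ℝ) < h := by linarith
  obtain ⟨hint1, hnn, hub⟩ := key₁ h hh h1
  obtain ⟨hint2, heq2⟩ := key₂ h hh h1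
  have hsplit : ∫ x in Ioi (0:ℝ), g x * g (x+h) =
      (∫ x in Ioc (0:ℝ) 1, g x * g (x+h)) + ∫ x in Ioi (1:ℝ), g x * g (x+h) := by
    rw [← Ioc_union_Ioi_eq_Ioi (zero_le_one (α := ℝ)),
      setIntegral_union (Ioc_disjoint_Ioi le_rfl) measurableSet_Ioi hint1 hint2]
  rw [← hL_eq h h1, hsplit, heq2]
  have hLh := (hL_pos h).ne'
  have hpow := (Real.rpow_pos_of_pos hh0 (1 - 2*γ)).ne'
  field_simp
end

section
/- Let g : (0,∞) → [0,∞) be measurable with ∫₀¹ g(x) dx < ∞, and suppose that g(x) = x^{-γ}·L₁(x) for all x > 1, where γ ∈ (1/2, 1) and L₁ : (0,∞) → ℝ is slowly varying at infinity and bounded away from 0 and ∞ on every interval of the form [1, T]. Then the autocovariance function has the long memory property: ∫₀^∞ (∫₀^∞ g(x)·g(x+h) dx) dh = ∞, i.e. the function h ↦ ∫₀^∞ g(x)·g(x+h) dx is not integrable on (0,∞). -/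
open MeasureTheory Set Filter

open scoped ENNReal


-- Step 1: the limsup auxiliary lemma
lemma bss_uct_aux (f : ℝ → ℝ) (hf : Measurable f)
    (h : ∀ s : ℝ, Tendsto (fun u => f (u + s) - f u) atTop (nhds 0))
    (ε : ℝ) (hε : 0 < ε) (v : ℕ → ℝ) (hv : ∀ n : ℕ, (n : ℝ) ≤ v n)
    (hfreq : ∀ n : ℕ, ∃ m, n ≤ m ∧
      (1/2 : ℝ≥0∞) ≤ volume {t | t ∈ Icc (0:ℝ) 2 ∧ ε/2 < |f (v m + t) - f (v m)|}) :
    False := by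
  set E : ℕ → Set ℝ := fun m => {t | t ∈ Icc (0:ℝ) 2 ∧ ε/2 < |f (v m + t) - f (v m)|} with hE
  have hEmeas : ∀ m, MeasurableSet (E m) := by
    intro m
    apply measurableSet_Icc.inter
    exact measurableSet_lt measurable_const
      ((hf.comp (measurable_const.add measurable_id)).sub measurable_const).abs
  have hEsub : ∀ m, E m ⊆ Icc (0:ℝ) 2 := fun m t ht => ht.1
  set G : ℕ → Set ℝ := fun n => ⋃ m, ⋃ (_ : n ≤ m), E m with hG
  have hGmeas : ∀ n, MeasurableSet (G n) := fun n =>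
    MeasurableSet.iUnion fun m => MeasurableSet.iUnion fun _ => hEmeas m
  have hGanti : Antitone G := by
    intro a b hab
    exact iUnion₂_mono' fun m hm => ⟨m, le_trans hab hm, subset_rfl⟩
  have hGsub : ∀ n, G n ⊆ Icc (0:ℝ) 2 := by
    intro n t ht
    simp only [hG, mem_iUnion] at ht
    obtain ⟨m, _, htm⟩ := ht
    exact hEsub m htm
  have hGfin : ∃ n, volume (G n) ≠ ∞ := by
    refine ⟨0, ?_⟩
    exact ne_of_lt (lt_of_le_of_lt (measure_mono (hGsub 0)) (by rw [Real.volume_Icc]; exact ENNReal.ofReal_lt_top))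
  have htend := tendsto_measure_iInter_atTop
    (fun n => (hGmeas n).nullMeasurableSet) hGanti hGfin
  have hGge : ∀ n, (1/2 : ℝ≥0∞) ≤ volume (G n) := by
    intro n
    obtain ⟨m, hm, hvol⟩ := hfreq n
    refine le_trans hvol (measure_mono ?_)
    exact subset_iUnion₂ (s := fun m _ => E m) m hm
  have hIge : (1/2 : ℝ≥0∞) ≤ volume (⋂ n, G n) :=
    ge_of_tendsto htend (Eventually.of_forall hGge)
  have hne : (⋂ n, G n).Nonempty := by
    rw [nonempty_iff_ne_empty]
    intro hemp
    rw [hemp] at hIge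
    simp at hIge
  obtain ⟨t, ht⟩ := hne
  have hvt : Tendsto v atTop atTop :=
    tendsto_atTop_mono hv tendsto_natCast_atTop_atTop
  have htt : Tendsto (fun m => f (v m + t) - f (v m)) atTop (nhds 0) := (h t).comp hvt
  have hev : ∀ᶠ m in atTop, |f (v m + t) - f (v m)| < ε/2 := by
    have := NormedAddCommGroup.tendsto_nhds_zero.mp htt (ε/2) (by linarith)
    simpa [Real.norm_eq_abs] using this
  obtain ⟨N, hN⟩ := eventually_atTop.mp hev
  have htN := mem_iInter.mp ht N
  simp only [hG, mem_iUnion] at htN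
  obtain ⟨m, hm, htm⟩ := htN
  exact absurd (hN m hm) (not_lt.mpr (le_of_lt htm.2))

lemma bss_uct (f : ℝ → ℝ) (hf : Measurable f)
    (h : ∀ s : ℝ, Tendsto (fun u => f (u + s) - f u) atTop (nhds 0))
    (ε : ℝ) (hε : 0 < ε) :
    ∃ U : ℝ, ∀ u, U ≤ u → ∀ s ∈ Icc (0:ℝ) 1, |f (u + s) - f u| ≤ ε := by
  by_contra hcon
  push_neg at hcon
  -- extract sequences
  have hseq : ∀ n : ℕ, ∃ u, (n:ℝ) ≤ u ∧ ∃ s ∈ Icc (0:ℝ) 1, ε < |f (u + s) - f u| := by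
    intro n
    obtain ⟨u, hu, s, hs, hb⟩ := hcon (n : ℝ)
    exact ⟨u, hu, s, hs, hb⟩
  choose u hu s hs hbig using hseq
  set A : ℕ → Set ℝ := fun n => {t | t ∈ Icc (0:ℝ) 2 ∧ ε/2 < |f (u n + t) - f (u n)|} with hA
  set B : ℕ → Set ℝ :=
    fun n => {t | t ∈ Icc (0:ℝ) 2 ∧ ε/2 < |f (u n + s n + t) - f (u n + s n)|} with hB
  have hmeasA : ∀ n, MeasurableSet (A n) := by
    intro n
    apply measurableSet_Icc.inter
    exact measurableSet_lt measurable_const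
      ((hf.comp (measurable_const.add measurable_id)).sub measurable_const).abs
  have hmeasB : ∀ n, MeasurableSet (B n) := by
    intro n
    apply measurableSet_Icc.inter
    exact measurableSet_lt measurable_const
      ((hf.comp (measurable_const.add measurable_id)).sub measurable_const).abs
  -- cover claim
  have hcover : ∀ n, Icc (1:ℝ) 2 ⊆ A n ∪ ((fun t => t + (-(s n))) ⁻¹' B n) := by
    intro n t ht
    by_cases hta : t ∈ A n
    · exact Or.inl hta
    · right
      have h1 : |f (u n + t) - f (u n)| ≤ ε/2 := by
        simp only [hA, mem_setOf_eq, mem_Icc, not_and, not_lt] at hta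
        exact hta ⟨le_trans zero_le_one ht.1, ht.2⟩
      have hs0 := (hs n).1
      have hs1 := (hs n).2
      show t + -(s n) ∈ B n
      refine ⟨?_, ?_⟩
      · simp only [mem_Icc]
        exact ⟨by linarith [ht.1], by linarith [ht.2]⟩
      · show ε/2 < |f (u n + s n + (t + -(s n))) - f (u n + s n)|
        have heq : u n + s n + (t + -(s n)) = u n + t := by ring
        rw [heq]
        have htri : |f (u n + s n) - f (u n)| ≤
            |f (u n + t) - f (u n + s n)| + |f (u n + t) - f (u n)| := by
          have := abs_sub_abs_le_abs_sub (f (u n + s n) - f (u n)) (f (u n + t) - f (u n))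
          calc |f (u n + s n) - f (u n)|
              = |(f (u n + s n) - f (u n + t)) + (f (u n + t) - f (u n))| := by ring_nf
            _ ≤ |f (u n + s n) - f (u n + t)| + |f (u n + t) - f (u n)| := abs_add_le _ _
            _ = |f (u n + t) - f (u n + s n)| + |f (u n + t) - f (u n)| := by
                rw [abs_sub_comm]
        have hb := hbig n
        linarith
  -- measure bound
  have hhalf : ∀ n, (1/2 : ℝ≥0∞) ≤ volume (A n) ∨ (1/2 : ℝ≥0∞) ≤ volume (B n) := by
    intro n
    by_contra hc
    push_neg at hc
    have h1 : volume (Icc (1:ℝ) 2) ≤ volume (A n) + volume (B n) := by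
      calc volume (Icc (1:ℝ) 2) ≤ volume (A n ∪ ((fun t => t + (-(s n))) ⁻¹' B n)) :=
            measure_mono (hcover n)
        _ ≤ volume (A n) + volume ((fun t => t + (-(s n))) ⁻¹' B n) := measure_union_le _ _
        _ = volume (A n) + volume (B n) := by
            rw [measure_preimage_add_right]
    rw [Real.volume_Icc] at h1
    have : ENNReal.ofReal (2 - 1) = 1 := by norm_num
    rw [this] at h1
    have h2 : volume (A n) + volume (B n) < 1/2 + 1/2 := ENNReal.add_lt_add hc.1 hc.2
    rw [ENNReal.add_halves] at h2
    exact absurd (lt_of_le_of_lt h1 h2) (lt_irrefl _)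
  -- split into two frequently cases
  have hfreq : (∀ n : ℕ, ∃ m, n ≤ m ∧ (1/2 : ℝ≥0∞) ≤ volume (A m)) ∨
      (∀ n : ℕ, ∃ m, n ≤ m ∧ (1/2 : ℝ≥0∞) ≤ volume (B m)) := by
    by_contra hc
    push_neg at hc
    obtain ⟨⟨n₁, hn₁⟩, ⟨n₂, hn₂⟩⟩ := hc
    rcases hhalf (max n₁ n₂) with hA' | hB'
    · exact absurd hA' (not_le.mpr (hn₁ (max n₁ n₂) (le_max_left _ _)))
    · exact absurd hB' (not_le.mpr (hn₂ (max n₁ n₂) (le_max_right _ _)))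
  rcases hfreq with hf1 | hf2
  · exact bss_uct_aux f hf h ε hε u hu hf1
  · refine bss_uct_aux f hf h ε hε (fun n => u n + s n) (fun n => ?_) hf2
    have h2 := (hs n).1
    show (n:ℝ) ≤ u n + s n
    linarith [hu n]

lemma bss_chain (f : ℝ → ℝ) (U ε : ℝ) (hε : 0 < ε)
    (hU : ∀ u, U ≤ u → ∀ s ∈ Icc (0:ℝ) 1, |f (u + s) - f u| ≤ ε) :
    ∀ u, U ≤ u → |f u - f U| ≤ ε * (u - U + 1) := by
  have key : ∀ n : ℕ, ∀ u, U ≤ u → u ≤ U + n + 1 → |f u - f U| ≤ ε * (n + 1) := by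
    intro n
    induction n with
    | zero =>
      intro u hu hu1
      have h1 := hU U le_rfl (u - U) ⟨by linarith, by push_cast at hu1; linarith⟩
      have : U + (u - U) = u := by ring
      rw [this] at h1
      simpa using h1
    | succ n ih =>
      intro u hu hu1
      by_cases hcase : u ≤ U + n + 1
      · refine le_trans (ih u hu hcase) ?_
        have : (n:ℝ) + 1 ≤ (n:ℝ) + 1 + 1 := by linarith
        push_cast
        nlinarith
      · push_neg at hcase
        have hu' : U ≤ u - 1 := by push_cast at hu1 ⊢; linarith
        have hu'1 : u - 1 ≤ U + n + 1 := by push_cast at hu1 ⊢; linarith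
        have h1 := ih (u - 1) hu' hu'1
        have h2 := hU (u - 1) hu' 1 ⟨zero_le_one, le_rfl⟩
        have : u - 1 + 1 = u := by ring
        rw [this] at h2
        calc |f u - f U| ≤ |f u - f (u - 1)| + |f (u - 1) - f U| := by
              have := abs_add_le (f u - f (u - 1)) (f (u - 1) - f U)
              simpa using this
          _ ≤ ε + ε * (n + 1) := add_le_add h2 h1
          _ = ε * ((n:ℝ) + 1 + 1) := by ring
          _ ≤ ε * (((n:ℕ) + 1 : ℕ) + 1) := by push_cast; linarith
  intro u hu
  set n := ⌊u - U⌋₊ with hn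
  have h0 : (0:ℝ) ≤ u - U := by linarith
  have h1 : (n:ℝ) ≤ u - U := Nat.floor_le h0
  have h2 : u - U < n + 1 := Nat.lt_floor_add_one _
  have h3 := key n u hu (by linarith)
  calc |f u - f U| ≤ ε * (n + 1) := h3
    _ ≤ ε * (u - U + 1) := by nlinarith

lemma bss_potter (γ : ℝ) (g L₁ : ℝ → ℝ)
    (hg_meas : Measurable g)
    (hform : ∀ x > (1:ℝ), g x = x ^ (-γ) * L₁ x)
    (hL₁_slow : ∀ t > (0:ℝ), Tendsto (fun x => L₁ (t * x) / L₁ x) atTop (nhds 1))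
    (hL₁_pos : ∀ x, 1 ≤ x → 0 < L₁ x)
    (ε : ℝ) (hε : 0 < ε) :
    ∃ X c C : ℝ, 1 ≤ X ∧ 0 < c ∧ 0 < C ∧
      ∀ x, X ≤ x → c * x ^ (-ε) ≤ L₁ x ∧ L₁ x ≤ C * x ^ ε := by
  set f : ℝ → ℝ := fun u => Real.log (Real.exp (γ * u) * g (Real.exp u)) with hfdef
  have hf_meas : Measurable f :=
    ((Real.measurable_exp.comp (measurable_id.const_mul γ)).mul
      (hg_meas.comp Real.measurable_exp)).log
  have f_eq : ∀ u : ℝ, 0 < u → f u = Real.log (L₁ (Real.exp u)) := by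
    intro u hu
    have he : (1:ℝ) < Real.exp u := by
      rw [← Real.exp_zero]
      exact Real.exp_lt_exp.mpr hu
    have hg := hform (Real.exp u) he
    have hrw : Real.exp (γ * u) * g (Real.exp u) = L₁ (Real.exp u) := by
      rw [hg, Real.rpow_def_of_pos (Real.exp_pos u), Real.log_exp, ← mul_assoc,
        ← Real.exp_add]
      have : γ * u + u * -γ = 0 := by ring
      rw [this, Real.exp_zero, one_mul]
    rw [hfdef]
    simp only []
    rw [hrw]
  have htend : ∀ s : ℝ, Tendsto (fun u => f (u + s) - f u) atTop (nhds 0) := by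
    intro s
    have h1 : Tendsto (fun u : ℝ => L₁ (Real.exp s * Real.exp u) / L₁ (Real.exp u))
        atTop (nhds 1) := (hL₁_slow (Real.exp s) (Real.exp_pos s)).comp Real.tendsto_exp_atTop
    have h2 : Tendsto (fun u : ℝ =>
        Real.log (L₁ (Real.exp s * Real.exp u) / L₁ (Real.exp u))) atTop (nhds 0) := by
      have hc : ContinuousAt Real.log 1 := Real.continuousAt_log one_ne_zero
      have := hc.tendsto.comp h1
      rwa [Real.log_one] at this
    refine Tendsto.congr' ?_ h2
    filter_upwards [eventually_gt_atTop (0:ℝ), eventually_gt_atTop (-s)] with u hu hus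
    have hu1 : (1:ℝ) ≤ Real.exp u := Real.one_le_exp hu.le
    have hus1 : (1:ℝ) ≤ Real.exp (u + s) := Real.one_le_exp (by linarith)
    have hp1 : 0 < L₁ (Real.exp u) := hL₁_pos _ hu1
    have hp2 : 0 < L₁ (Real.exp (u + s)) := hL₁_pos _ hus1
    have heq : Real.exp s * Real.exp u = Real.exp (u + s) := by
      rw [← Real.exp_add, add_comm]
    rw [f_eq u hu, f_eq (u + s) (by linarith), heq, Real.log_div hp2.ne' hp1.ne']
  obtain ⟨U₀, hU₀⟩ := bss_uct f hf_meas htend ε hε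
  set U : ℝ := max U₀ 1 with hUdef
  have hU : ∀ u, U ≤ u → ∀ s ∈ Icc (0:ℝ) 1, |f (u + s) - f u| ≤ ε :=
    fun u hu => hU₀ u (le_trans (le_max_left _ _) hu)
  have hchain := bss_chain f U ε hε hU
  have hU1 : (1:ℝ) ≤ U := le_max_right _ _
  refine ⟨Real.exp U, Real.exp (f U + ε * U - ε), Real.exp (f U - ε * U + ε),
    Real.one_le_exp (by linarith), Real.exp_pos _, Real.exp_pos _, ?_⟩
  intro x hx
  have hx0 : (0:ℝ) < x := lt_of_lt_of_le (Real.exp_pos U) hx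
  have hu : U ≤ Real.log x := (Real.le_log_iff_exp_le hx0).mpr hx
  have hupos : 0 < Real.log x := by linarith
  have hfx : f (Real.log x) = Real.log (L₁ x) := by
    rw [f_eq _ hupos, Real.exp_log hx0]
  have hb := hchain (Real.log x) hu
  rw [hfx] at hb
  have hx1 : (1:ℝ) ≤ x := le_trans (Real.one_le_exp (by linarith)) hx
  have hL1x : 0 < L₁ x := hL₁_pos x hx1
  have habs := abs_le.mp hb
  have hxe : x ^ ε = Real.exp (ε * Real.log x) := by
    rw [Real.rpow_def_of_pos hx0, mul_comm]
  have hxe' : x ^ (-ε) = Real.exp (-(ε * Real.log x)) := by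
    rw [Real.rpow_def_of_pos hx0]
    congr 1
    ring
  constructor
  · calc Real.exp (f U + ε * U - ε) * x ^ (-ε)
        = Real.exp (f U + ε * U - ε + -(ε * Real.log x)) := by rw [Real.exp_add, hxe']
      _ ≤ Real.exp (Real.log (L₁ x)) := Real.exp_le_exp.mpr (by linarith [habs.1])
      _ = L₁ x := Real.exp_log hL1x
  · calc L₁ x = Real.exp (Real.log (L₁ x)) := (Real.exp_log hL1x).symm
      _ ≤ Real.exp (f U - ε * U + ε + ε * Real.log x) :=
          Real.exp_le_exp.mpr (by linarith [habs.2])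
      _ = Real.exp (f U - ε * U + ε) * x ^ ε := by rw [Real.exp_add, hxe]

set_option maxHeartbeats 1600000 in
/-- Long memory property: if `g(x) = x^(-γ) L₁(x)` for `x > 1` with `γ ∈ (1/2,1)` and `L₁`
slowly varying at infinity, then the autocovariance function
`h ↦ ∫₀^∞ g(x) g(x+h) dx` is not integrable on `(0,∞)`. -/
theorem bss_long_memory_property
    (γ : ℝ) (hγ : γ ∈ Ioo (1/2 : ℝ) 1)
    (g L₁ : ℝ → ℝ)
    (hg_meas : Measurable g)
    (hg_nonneg : ∀ x ∈ Ioi (0:ℝ), 0 ≤ g x)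
    (hg_int01 : IntegrableOn g (Ioc 0 1))
    (hform : ∀ x > (1:ℝ), g x = x ^ (-γ) * L₁ x)
    (hL₁_slow : ∀ t > (0:ℝ), Tendsto (fun x => L₁ (t * x) / L₁ x) atTop (nhds 1))
    (hL₁_bdd : ∀ T ≥ (1:ℝ), ∃ c Cu : ℝ, 0 < c ∧ ∀ x ∈ Icc (1:ℝ) T, c ≤ L₁ x ∧ L₁ x ≤ Cu) :
    ¬ IntegrableOn (fun h => ∫ x in Ioi (0:ℝ), g x * g (x + h)) (Ioi 0) := by
  obtain ⟨hγ1, hγ2⟩ := hγ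
  intro hint
  -- positivity of L₁ on [1, ∞)
  have hL₁_pos : ∀ x, (1:ℝ) ≤ x → 0 < L₁ x := by
    intro x hx
    obtain ⟨c, Cu, hc, hb⟩ := hL₁_bdd x hx
    exact lt_of_lt_of_le hc (hb x ⟨le_rfl.trans hx |>.trans_eq rfl |> fun _ => hx, le_rfl⟩).1
  -- choose ε
  set ε : ℝ := min (γ - 1/2) (1 - γ) / 2 with hεdef
  have hε : 0 < ε := by
    have h1 : 0 < γ - 1/2 := by linarith
    have h2 : 0 < 1 - γ := by linarith
    rw [hεdef]
    exact div_pos (lt_min h1 h2) two_pos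
  have hε1 : ε ≤ (γ - 1/2)/2 := by
    have := min_le_left (γ - 1/2) (1 - γ); rw [hεdef]; linarith
  have hε2 : ε ≤ (1 - γ)/2 := by
    have := min_le_right (γ - 1/2) (1 - γ); rw [hεdef]; linarith
  set β : ℝ := γ + ε with hβdef
  have hβ1 : β < 1 := by rw [hβdef]; linarith
  have hβ0 : 0 < β := by rw [hβdef]; linarith
  have hεγ : ε - γ < 0 := by linarith
  have h2εγ : 2 * (ε - γ) < -1 := by linarith
  -- Potter bounds
  obtain ⟨X, c, C, hX1, hc, hC, hP⟩ :=
    bss_potter γ g L₁ hg_meas hform hL₁_slow hL₁_pos ε hε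
  obtain ⟨c₁, Cu, hc₁, hb₁⟩ := hL₁_bdd X hX1
  set D : ℝ := max C Cu with hDdef
  set d : ℝ := min c c₁ with hddef
  have hD0 : 0 < D := lt_of_lt_of_le hC (le_max_left _ _)
  have hd0 : 0 < d := lt_min hc hc₁
  -- global bounds on g for y > 1
  have hgub : ∀ y : ℝ, 1 < y → g y ≤ D * y ^ (ε - γ) := by
    intro y hy
    have hy0 : (0:ℝ) < y := by linarith
    have hL : L₁ y ≤ D * y ^ ε := by
      by_cases hcase : X ≤ y
      · exact le_trans (hP y hcase).2
          (mul_le_mul_of_nonneg_right (le_max_left _ _) (Real.rpow_nonneg hy0.le ε))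
      · push_neg at hcase
        have h1 : L₁ y ≤ Cu := (hb₁ y ⟨hy.le, hcase.le⟩).2
        have h2 : (1:ℝ) ≤ y ^ ε := Real.one_le_rpow hy.le hε.le
        have h3 : Cu ≤ D := le_max_right _ _
        have hCu0 : 0 < Cu := lt_of_lt_of_le (hL₁_pos y hy.le) h1
        nlinarith
    have hmul : y ^ (-γ) * L₁ y ≤ y ^ (-γ) * (D * y ^ ε) :=
      mul_le_mul_of_nonneg_left hL (Real.rpow_nonneg hy0.le _)
    rw [hform y hy]
    refine le_trans hmul (le_of_eq ?_)
    rw [← mul_assoc, mul_comm (y ^ (-γ)) D, mul_assoc, ← Real.rpow_add hy0]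
    congr 1
    ring
  have hglb : ∀ y : ℝ, 1 < y → d * y ^ (-β) ≤ g y := by
    intro y hy
    have hy0 : (0:ℝ) < y := by linarith
    have hL : d * y ^ (-ε) ≤ L₁ y := by
      by_cases hcase : X ≤ y
      · exact le_trans
          (mul_le_mul_of_nonneg_right (min_le_left _ _) (Real.rpow_nonneg hy0.le _))
          (hP y hcase).1
      · push_neg at hcase
        have h1 : c₁ ≤ L₁ y := (hb₁ y ⟨hy.le, hcase.le⟩).1
        have h2 : y ^ (-ε) ≤ 1 := Real.rpow_le_one_of_one_le_of_nonpos hy.le (by linarith)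
        have h3 : d ≤ c₁ := min_le_right _ _
        nlinarith [Real.rpow_nonneg hy0.le (-ε)]
    have hmul : y ^ (-γ) * (d * y ^ (-ε)) ≤ y ^ (-γ) * L₁ y :=
      mul_le_mul_of_nonneg_left hL (Real.rpow_nonneg hy0.le _)
    rw [hform y hy]
    refine le_trans (le_of_eq ?_) hmul
    rw [← mul_assoc, mul_comm (y ^ (-γ)) d, mul_assoc, ← Real.rpow_add hy0]
    congr 2
    rw [hβdef]
    ring
  -- integrability of the inner integrand for h > 1
  have hintOn : ∀ h : ℝ, 1 < h → IntegrableOn (fun x => g x * g (x + h)) (Ioi 0) := by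
    intro h hh
    have hmeasF : Measurable fun x : ℝ => g x * g (x + h) :=
      hg_meas.mul (hg_meas.comp (measurable_id.add_const h))
    have hint1 : IntegrableOn (fun x => g x * g (x + h)) (Ioc 0 1) := by
      refine Integrable.mono' (hg_int01.const_mul D) hmeasF.aestronglyMeasurable.restrict ?_
      filter_upwards [ae_restrict_mem measurableSet_Ioc] with x hx
      have hx0 : 0 < x := hx.1
      have hxh : 1 < x + h := by linarith
      have hg1 : 0 ≤ g x := hg_nonneg x hx0
      have hg2 : 0 ≤ g (x + h) := hg_nonneg _ (by simp only [mem_Ioi]; linarith)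
      rw [Real.norm_eq_abs, abs_of_nonneg (mul_nonneg hg1 hg2)]
      have h1 : g (x + h) ≤ D * (x + h) ^ (ε - γ) := hgub _ hxh
      have h2 : (x + h) ^ (ε - γ) ≤ 1 :=
        Real.rpow_le_one_of_one_le_of_nonpos hxh.le hεγ.le
      have h3 : g (x + h) ≤ D := by nlinarith [mul_le_mul_of_nonneg_left h2 hD0.le]
      calc g x * g (x + h) ≤ g x * D := mul_le_mul_of_nonneg_left h3 hg1
        _ = D * g x := mul_comm _ _
    have hint2 : IntegrableOn (fun x => g x * g (x + h)) (Ioi 1) := by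
      have hpint : IntegrableOn (fun x : ℝ => x ^ (2 * (ε - γ))) (Ioi 1) :=
        integrableOn_Ioi_rpow_of_lt h2εγ one_pos
      refine Integrable.mono' (hpint.const_mul (D * D)) hmeasF.aestronglyMeasurable.restrict ?_
      filter_upwards [ae_restrict_mem measurableSet_Ioi] with x hx
      have hx1 : (1:ℝ) < x := hx
      have hx0 : (0:ℝ) < x := by linarith
      have hxh : 1 < x + h := by linarith
      have hg1 : 0 ≤ g x := hg_nonneg x (by simp only [mem_Ioi]; linarith)
      have hg2 : 0 ≤ g (x + h) := hg_nonneg _ (by simp only [mem_Ioi]; linarith)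
      rw [Real.norm_eq_abs, abs_of_nonneg (mul_nonneg hg1 hg2)]
      have hxe0 : 0 ≤ x ^ (ε - γ) := Real.rpow_nonneg hx0.le _
      have hb1 : g x ≤ D * x ^ (ε - γ) := hgub x hx1
      have hb2 : g (x + h) ≤ D * (x + h) ^ (ε - γ) := hgub _ hxh
      have hb3 : (x + h) ^ (ε - γ) ≤ x ^ (ε - γ) :=
        Real.rpow_le_rpow_of_nonpos hx0 (by linarith) hεγ.le
      have hxx : x ^ (ε - γ) * x ^ (ε - γ) = x ^ (2 * (ε - γ)) := by
        rw [← Real.rpow_add hx0]; congr 1; ring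
      calc g x * g (x + h) ≤ (D * x ^ (ε - γ)) * (D * (x + h) ^ (ε - γ)) := by
            apply mul_le_mul hb1 hb2 hg2
            exact mul_nonneg hD0.le hxe0
        _ ≤ (D * x ^ (ε - γ)) * (D * x ^ (ε - γ)) := by
            have h4 := mul_le_mul_of_nonneg_left hb3
              (mul_nonneg (mul_nonneg hD0.le hxe0) hD0.le)
            nlinarith [h4]
        _ = D * D * (x ^ (ε - γ) * x ^ (ε - γ)) := by ring
        _ = D * D * x ^ (2 * (ε - γ)) := by rw [hxx]
    have := hint1.union hint2
    rwa [Ioc_union_Ioi_eq_Ioi (by norm_num : (0:ℝ) ≤ 1)] at this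
  -- lower bound for the autocovariance, h > 1
  set K : ℝ := d * d * (2:ℝ) ^ (-β) * (3:ℝ) ^ (-β) with hKdef
  have hK0 : 0 < K := by
    have h2p := Real.rpow_pos_of_pos (by norm_num : (0:ℝ) < 2) (-β)
    have h3p := Real.rpow_pos_of_pos (by norm_num : (0:ℝ) < 3) (-β)
    rw [hKdef]
    exact mul_pos (mul_pos (mul_pos hd0 hd0) h2p) h3p
  have hlow : ∀ h : ℝ, 1 < h → K * h ^ (-β) ≤ ∫ x in Ioi (0:ℝ), g x * g (x + h) := by
    intro h hh
    have hh0 : (0:ℝ) < h := by linarith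
    set K₀ : ℝ := d * (2:ℝ) ^ (-β) * (d * (2 + h) ^ (-β)) with hK₀def
    have hnn : 0 ≤ᵐ[volume.restrict (Ioi (0:ℝ))] fun x => g x * g (x + h) := by
      filter_upwards [ae_restrict_mem measurableSet_Ioi] with x hx
      have hx0 : (0:ℝ) < x := hx
      exact mul_nonneg (hg_nonneg x hx) (hg_nonneg _ (by simp only [mem_Ioi]; linarith))
    have s1 : ∫ x in Ioc (1:ℝ) 2, g x * g (x + h) ≤ ∫ x in Ioi (0:ℝ), g x * g (x + h) :=
      setIntegral_mono_set (hintOn h hh) hnn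
        (HasSubset.Subset.eventuallyLE (fun x hx => lt_trans zero_lt_one hx.1))
    have s2 : K₀ ≤ ∫ x in Ioc (1:ℝ) 2, g x * g (x + h) := by
      have hconst : ∫ _x in Ioc (1:ℝ) 2, K₀ = K₀ := by
        rw [setIntegral_const]
        simp [Real.volume_Ioc]
        norm_num
      rw [← hconst]
      refine setIntegral_mono_on ((integrableOn_const_iff (C := K₀)).mpr ?_)
        ((hintOn h hh).mono_set (fun x hx => lt_trans zero_lt_one hx.1))
        measurableSet_Ioc ?_
      · right; rw [Real.volume_Ioc]; exact ENNReal.ofReal_lt_top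
      · intro x hx
        have hx1 : (1:ℝ) < x := hx.1
        have hx2 : x ≤ 2 := hx.2
        have hx0 : (0:ℝ) < x := by linarith
        have hgx : d * x ^ (-β) ≤ g x := hglb x hx1
        have hgxh : d * (x + h) ^ (-β) ≤ g (x + h) := hglb _ (by linarith)
        have hr1 : (2:ℝ) ^ (-β) ≤ x ^ (-β) :=
          Real.rpow_le_rpow_of_nonpos hx0 hx2 (by linarith)
        have hr2 : (2 + h) ^ (-β) ≤ (x + h) ^ (-β) :=
          Real.rpow_le_rpow_of_nonpos (by linarith) (by linarith) (by linarith)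
        have hq1 : d * (2:ℝ) ^ (-β) ≤ g x := by
          refine le_trans ?_ hgx
          exact mul_le_mul_of_nonneg_left hr1 hd0.le
        have hq2 : d * (2 + h) ^ (-β) ≤ g (x + h) := by
          refine le_trans ?_ hgxh
          exact mul_le_mul_of_nonneg_left hr2 hd0.le
        refine mul_le_mul hq1 hq2 ?_ ?_
        · exact mul_nonneg hd0.le (Real.rpow_nonneg (by linarith) _)
        · exact le_trans (mul_nonneg hd0.le (Real.rpow_nonneg (by norm_num) _)) hq1
    refine le_trans ?_ (le_trans s2 s1)
    -- K * h^(-β) ≤ K₀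
    have h2h : (2 + h) ^ (-β) ≥ (3 * h) ^ (-β) :=
      Real.rpow_le_rpow_of_nonpos (by linarith) (by linarith) (by linarith)
    have h3h : (3 * h : ℝ) ^ (-β) = (3:ℝ) ^ (-β) * h ^ (-β) :=
      Real.mul_rpow (by norm_num) hh0.le
    rw [hK₀def, hKdef]
    have hhb0 : 0 ≤ h ^ (-β) := Real.rpow_nonneg hh0.le _
    have h20 : 0 ≤ (2:ℝ) ^ (-β) := Real.rpow_nonneg (by norm_num) _
    have h5 : (3:ℝ) ^ (-β) * h ^ (-β) ≤ (2 + h) ^ (-β) := by rw [← h3h]; exact h2h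
    have h6 := mul_le_mul_of_nonneg_left h5
      (mul_nonneg (mul_nonneg hd0.le h20) hd0.le)
    nlinarith [h6]
  -- conclude
  have hCint1 : IntegrableOn (fun h => ∫ x in Ioi (0:ℝ), g x * g (x + h)) (Ioi 1) :=
    hint.mono_set (Ioi_subset_Ioi zero_le_one)
  have hrpow_meas : AEStronglyMeasurable (fun h : ℝ => h ^ (-β))
      (volume.restrict (Ioi (1:ℝ))) := by
    refine ContinuousOn.aestronglyMeasurable ?_ measurableSet_Ioi
    exact ContinuousOn.rpow_const continuousOn_id
      (fun x hx => Or.inl (ne_of_gt (lt_trans zero_lt_one hx)))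
  have hKint : IntegrableOn (fun h : ℝ => K * h ^ (-β)) (Ioi 1) := by
    refine Integrable.mono' hCint1 (hrpow_meas.const_mul K) ?_
    filter_upwards [ae_restrict_mem measurableSet_Ioi] with h hh
    have hh1 : (1:ℝ) < h := hh
    have hh0 : (0:ℝ) < h := by linarith
    rw [Real.norm_eq_abs,
      abs_of_nonneg (mul_nonneg hK0.le (Real.rpow_nonneg hh0.le _))]
    exact hlow h hh1
  have hfin : IntegrableOn (fun h : ℝ => h ^ (-β)) (Ioi 1) := by
    have h2 := hKint.const_mul K⁻¹
    have heq : (fun h : ℝ => K⁻¹ * (K * h ^ (-β))) = fun h : ℝ => h ^ (-β) := by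
      funext h
      rw [← mul_assoc, inv_mul_cancel₀ hK0.ne', one_mul]
    rwa [heq] at h2
  rw [integrableOn_Ioi_rpow_iff one_pos] at hfin
  linarith
end

section
/- Let α ∈ (-1/2, 1/2) and λ > 0, and let g be the gamma kernel g(x) = x^α·e^{-λx} for x > 0. Then, as h → ∞, the autocovariance integral ∫₀^∞ g(x)·g(x+h) dx = ∫₀^∞ x^α·(x+h)^α·e^{-λ(2x+h)} dx is asymptotically equivalent to Γ(α+1)·(2λ)^{-(α+1)} · e^{-λh} · h^{α}, i.e. the ratio of the two sides tends to 1; in particular the autocorrelation of the Gamma-BSS model decays exponentially fast (short memory). -/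
open MeasureTheory Set Filter

private lemma intOn (s b : ℝ) (hs : -1 < s) (hb : 0 < b) :
    IntegrableOn (fun x : ℝ => x ^ s * Real.exp (-b * x)) (Ioi 0) := by
  have := integrableOn_rpow_mul_exp_neg_mul_rpow (p := 1) hs one_pos hb
  simpa [Real.rpow_one] using this


/-- Gamma kernel: for `g(x) = x^α e^(-λx)`, the autocovariance integral satisfies
`∫₀^∞ g(x) g(x+h) dx = ∫₀^∞ x^α (x+h)^α e^(-λ(2x+h)) dx
  ~ Γ(α+1) (2λ)^(-(α+1)) e^(-λh) h^α` as `h → ∞` (short memory). -/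
theorem gamma_bss_acf_asymptotics
    (α lam : ℝ) (hα : α ∈ Ioo (-(1:ℝ)/2) (1/2)) (hlam : 0 < lam) :
    (∀ h : ℝ,
      (∫ x in Ioi (0:ℝ),
          (x ^ α * Real.exp (-lam * x)) * ((x + h) ^ α * Real.exp (-lam * (x + h))))
        = ∫ x in Ioi (0:ℝ), x ^ α * (x + h) ^ α * Real.exp (-lam * (2 * x + h)))
    ∧ Tendsto
        (fun h =>
          (∫ x in Ioi (0:ℝ),
              (x ^ α * Real.exp (-lam * x)) * ((x + h) ^ α * Real.exp (-lam * (x + h)))) /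
            (Real.Gamma (α + 1) * (2 * lam) ^ (-(α + 1)) * Real.exp (-lam * h) * h ^ α))
        atTop (nhds 1) := by
  obtain ⟨hα1, hα2⟩ := hα
  have hαlt : -1 < α := by linarith
  have h2lam : (0:ℝ) < 2 * lam := by linarith
  set C : ℝ := Real.Gamma (α + 1) * (2 * lam) ^ (-(α + 1)) with hCdef
  have hC : 0 < C := by
    have : 0 < Real.Gamma (α + 1) := Real.Gamma_pos_of_pos (by linarith)
    positivity
  -- Part 1
  have part1 : ∀ h : ℝ,
      (∫ x in Ioi (0:ℝ),
          (x ^ α * Real.exp (-lam * x)) * ((x + h) ^ α * Real.exp (-lam * (x + h))))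
        = ∫ x in Ioi (0:ℝ), x ^ α * (x + h) ^ α * Real.exp (-lam * (2 * x + h)) := by
    intro h
    congr 1
    funext x
    rw [show -lam * (2 * x + h) = -lam * x + -lam * (x + h) by ring, Real.exp_add]
    ring
  refine ⟨part1, ?_⟩
  -- J h
  set J : ℝ → ℝ := fun h => ∫ x in Ioi (0:ℝ),
      x ^ α * (1 + x / h) ^ α * Real.exp (-(2 * lam) * x) with hJ
  -- Step A : for h > 0 the integral factorizes
  have stepA : ∀ h : ℝ, 0 < h →
      (∫ x in Ioi (0:ℝ),
          (x ^ α * Real.exp (-lam * x)) * ((x + h) ^ α * Real.exp (-lam * (x + h))))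
        = (Real.exp (-lam * h) * h ^ α) * J h := by
    intro h hh
    rw [hJ, ← integral_const_mul]
    refine setIntegral_congr_fun measurableSet_Ioi (fun x hx => ?_)
    have hx0 : (0:ℝ) < x := hx
    have hfac : (x + h) ^ α = h ^ α * (1 + x / h) ^ α := by
      rw [← Real.mul_rpow hh.le (by positivity)]
      congr 1
      field_simp
      ring
    have e1 : Real.exp (-lam * x) * Real.exp (-lam * (x + h))
        = Real.exp (-lam * h) * Real.exp (-(2 * lam) * x) := by
      rw [← Real.exp_add, ← Real.exp_add]; ring_nf
    rw [hfac]
    linear_combination x ^ α * (h ^ α * (1 + x / h) ^ α) * e1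
  -- Step B : J tends to C
  have keyint : (∫ x in Ioi (0:ℝ), x ^ α * Real.exp (-(2 * lam) * x)) = C := by
    have key := Real.integral_rpow_mul_exp_neg_mul_Ioi (a := α + 1) (r := 2 * lam)
      (by linarith) h2lam
    have h1 : (∫ x in Ioi (0:ℝ), x ^ α * Real.exp (-(2 * lam) * x))
        = ∫ t in Ioi (0:ℝ), t ^ (α + 1 - 1) * Real.exp (-(2 * lam * t)) := by
      congr 1
      funext t
      rw [add_sub_cancel_right, neg_mul]
    rw [hCdef, h1, key, one_div, Real.inv_rpow h2lam.le, ← Real.rpow_neg h2lam.le, mul_comm]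
  have stepB : Tendsto J atTop (nhds C) := by
    have hdom : IntegrableOn (fun x : ℝ => x ^ α * Real.exp (-(2 * lam) * x)
        + x ^ (α + 1) * Real.exp (-(2 * lam) * x)) (Ioi 0) :=
      (intOn α (2*lam) hαlt h2lam).add (intOn (α+1) (2*lam) (by linarith) h2lam)
    rw [show (nhds C) = nhds (∫ x in Ioi (0:ℝ), x ^ α * Real.exp (-(2 * lam) * x)) by
      rw [keyint]]
    apply tendsto_integral_filter_of_dominated_convergence
      (fun x => x ^ α * Real.exp (-(2 * lam) * x) + x ^ (α + 1) * Real.exp (-(2 * lam) * x))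
    · filter_upwards [eventually_ge_atTop (1:ℝ)] with h hh
      apply Measurable.aestronglyMeasurable
      fun_prop
    · filter_upwards [eventually_ge_atTop (1:ℝ)] with h hh
      filter_upwards [self_mem_ae_restrict measurableSet_Ioi] with x hx
      have hx0 : (0:ℝ) < x := hx
      have hb1 : (1:ℝ) ≤ 1 + x / h := by
        have : 0 ≤ x / h := by positivity
        linarith
      have hkey : (1 + x / h) ^ α ≤ 1 + x := by
        rcases le_or_gt 0 α with hα0 | hα0
        · calc (1 + x / h) ^ α ≤ (1 + x) ^ α := by
                apply Real.rpow_le_rpow (by linarith) _ hα0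
                have : x / h ≤ x := by
                  rw [div_le_iff₀ (by linarith)]
                  nlinarith
                linarith
          _ ≤ (1 + x) ^ (1:ℝ) := by
                apply Real.rpow_le_rpow_of_exponent_le (by linarith) (by linarith)
          _ = 1 + x := Real.rpow_one _
        · calc (1 + x / h) ^ α ≤ 1 :=
                Real.rpow_le_one_of_one_le_of_nonpos hb1 hα0.le
          _ ≤ 1 + x := by linarith
      have hnn : 0 ≤ x ^ α * (1 + x / h) ^ α * Real.exp (-(2 * lam) * x) := by positivity
      rw [Real.norm_eq_abs, abs_of_nonneg hnn]
      have hexp : 0 < Real.exp (-(2 * lam) * x) := Real.exp_pos _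
      have hxα : 0 ≤ x ^ α := (Real.rpow_pos_of_pos hx0 _).le
      calc x ^ α * (1 + x / h) ^ α * Real.exp (-(2 * lam) * x)
          ≤ x ^ α * (1 + x) * Real.exp (-(2 * lam) * x) := by
            apply mul_le_mul_of_nonneg_right _ hexp.le
            exact mul_le_mul_of_nonneg_left hkey hxα
        _ = x ^ α * Real.exp (-(2 * lam) * x) + x ^ (α + 1) * Real.exp (-(2 * lam) * x) := by
            rw [Real.rpow_add_one hx0.ne']
            ring
    · exact hdom
    · filter_upwards [self_mem_ae_restrict measurableSet_Ioi] with x hx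
      have hx0 : (0:ℝ) < x := hx
      have h1 : Tendsto (fun h : ℝ => 1 + x / h) atTop (nhds 1) := by
        have : Tendsto (fun h : ℝ => x / h) atTop (nhds 0) :=
          Tendsto.div_atTop tendsto_const_nhds tendsto_id
        simpa using tendsto_const_nhds.add this
      have h2 : Tendsto (fun h : ℝ => (1 + x / h) ^ α) atTop (nhds 1) := by
        have := h1.rpow_const (p := α) (Or.inl one_ne_zero)
        simpa using this
      have := (h2.const_mul (x ^ α)).mul_const (Real.exp (-(2 * lam) * x))
      simpa [mul_comm, mul_assoc, mul_left_comm] using this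
  -- Step C : conclude
  have final : Tendsto (fun h => J h / C) atTop (nhds 1) := by
    have := stepB.div_const C
    rwa [div_self hC.ne'] at this
  apply final.congr'
  filter_upwards [eventually_gt_atTop (0:ℝ)] with h hh
  rw [stepA h hh]
  have hne : Real.exp (-lam * h) * h ^ α ≠ 0 := by positivity
  rw [show Real.Gamma (α + 1) * (2 * lam) ^ (-(α + 1)) * Real.exp (-lam * h) * h ^ α
      = (Real.exp (-lam * h) * h ^ α) * C by rw [hCdef]; ring,
    mul_div_mul_left _ _ hne]
end

section
/- Let α ∈ (-1/2, 1/2) and γ > 1, and let g be the power law kernel g(x) = x^α·(1+x)^{-γ-α} for x > 0. Then, as h → ∞, ∫₀^∞ g(x)·g(x+h) dx is asymptotically equivalent to (∫₀^∞ x^α·(1+x)^{-γ-α} dx) · h^{-γ}, i.e. the ratio of the two sides tends to 1; so the autocorrelation of the Power-BSS model decays like h^{-γ}. -/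
open MeasureTheory Set Filter

private lemma pbss_contOn (α γ : ℝ) :
    ContinuousOn (fun x : ℝ => x ^ α * (1 + x) ^ (-γ - α)) (Ioi 0) := by
  apply ContinuousOn.mul
  · exact continuousOn_id.rpow_const fun x hx => Or.inl (ne_of_gt hx)
  · exact (continuousOn_const.add continuousOn_id).rpow_const
      fun x hx => Or.inl (by have : (0:ℝ) < x := hx; show (1:ℝ) + x ≠ 0; positivity)

private lemma pbss_nonneg (α γ : ℝ) {x : ℝ} (hx : 0 ≤ x) :
    0 ≤ x ^ α * (1 + x) ^ (-γ - α) :=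
  mul_nonneg (Real.rpow_nonneg hx _) (Real.rpow_nonneg (by linarith) _)

private lemma pbss_integrable (α γ : ℝ) (hα : -1 < α) (hγ : 1 < γ) :
    IntegrableOn (fun x : ℝ => x ^ α * (1 + x) ^ (-γ - α)) (Ioi 0) := by
  have hexp : -γ - α ≤ 0 := by linarith
  have h1 : IntegrableOn (fun x : ℝ => x ^ α * (1 + x) ^ (-γ - α)) (Ioc 0 1) := by
    refine Integrable.mono' ((intervalIntegral.intervalIntegrable_rpow'
      (r := α) (by linarith)).1)
      (((pbss_contOn α γ).mono Ioc_subset_Ioi_self).aestronglyMeasurable measurableSet_Ioc) ?_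
    refine (ae_restrict_iff' measurableSet_Ioc).2 (ae_of_all _ fun x hx => ?_)
    rw [Real.norm_eq_abs, abs_of_nonneg (pbss_nonneg α γ hx.1.le)]
    exact mul_le_of_le_one_right (Real.rpow_nonneg hx.1.le _)
      (Real.rpow_le_one_of_one_le_of_nonpos (by linarith [hx.1]) hexp)
  have h2 : IntegrableOn (fun x : ℝ => x ^ α * (1 + x) ^ (-γ - α)) (Ioi 1) := by
    refine Integrable.mono' (integrableOn_Ioi_rpow_of_lt (a := -γ) (by linarith) one_pos)
      (((pbss_contOn α γ).mono fun x (hx : (1:ℝ) < x) => lt_trans one_pos hx).aestronglyMeasurable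
        measurableSet_Ioi) ?_
    refine (ae_restrict_iff' measurableSet_Ioi).2 (ae_of_all _ fun x hx => ?_)
    have hx0 : (0:ℝ) < x := lt_trans one_pos hx
    rw [Real.norm_eq_abs, abs_of_nonneg (pbss_nonneg α γ hx0.le)]
    calc x ^ α * (1 + x) ^ (-γ - α) ≤ x ^ α * x ^ (-γ - α) :=
          mul_le_mul_of_nonneg_left
            (Real.rpow_le_rpow_of_nonpos hx0 (by linarith) hexp)
            (Real.rpow_nonneg hx0.le _)
      _ = x ^ (-γ) := by rw [← Real.rpow_add hx0]; ring_nf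
  have := h1.union h2
  rwa [Ioc_union_Ioi_eq_Ioi zero_le_one] at this

private lemma pbss_integral_pos (α γ : ℝ) (hα : -1 < α) (hγ : 1 < γ) :
    0 < ∫ x in Ioi (0:ℝ), x ^ α * (1 + x) ^ (-γ - α) := by
  rw [setIntegral_pos_iff_support_of_nonneg_ae
    ((ae_restrict_iff' measurableSet_Ioi).2 (ae_of_all _ fun x hx => pbss_nonneg α γ (le_of_lt hx)))
    (pbss_integrable α γ hα hγ)]
  have hsub : Ioi (0:ℝ) ⊆ Function.support (fun x : ℝ => x ^ α * (1 + x) ^ (-γ - α)) ∩ Ioi 0 := by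
    intro x hx
    refine ⟨?_, hx⟩
    have hx0 : (0:ℝ) < x := hx
    exact ne_of_gt (mul_pos (Real.rpow_pos_of_pos hx0 _) (Real.rpow_pos_of_pos (by linarith) _))
  calc (0:ENNReal) < volume (Ioi (0:ℝ)) := by simp
    _ ≤ _ := measure_mono hsub

/-- Power law kernel, case γ > 1: for `g(x) = x^α (1+x)^(-γ-α)`,
`∫₀^∞ g(x) g(x+h) dx ~ (∫₀^∞ g(x) dx) · h^(-γ)` as `h → ∞`. -/
theorem power_bss_acf_asymptotics_integrable
    (α γ : ℝ) (hα : α ∈ Ioo (-(1:ℝ)/2) (1/2)) (hγ : 1 < γ) :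
    Tendsto
      (fun h =>
        (∫ x in Ioi (0:ℝ),
            (x ^ α * (1 + x) ^ (-γ - α)) * ((x + h) ^ α * (1 + (x + h)) ^ (-γ - α))) /
          ((∫ x in Ioi (0:ℝ), x ^ α * (1 + x) ^ (-γ - α)) * h ^ (-γ)))
      atTop (nhds 1) := by
  obtain ⟨hα1, hα2⟩ := hα
  have hα1' : -1 < α := by linarith
  have hexp : -γ - α ≤ 0 := by linarith
  set g : ℝ → ℝ := fun x => x ^ α * (1 + x) ^ (-γ - α) with hg
  set C : ℝ := ∫ x in Ioi (0:ℝ), g x with hC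
  have hCpos : 0 < C := pbss_integral_pos α γ hα1' hγ
  set F : ℝ → ℝ → ℝ := fun h x => (g x * g (x + h)) * h ^ γ with hF
  -- dominated convergence
  have key : Tendsto (fun h => ∫ x in Ioi (0:ℝ), F h x) atTop (nhds C) := by
    refine tendsto_integral_filter_of_dominated_convergence g ?_ ?_
      (pbss_integrable α γ hα1' hγ) ?_
    · filter_upwards [eventually_ge_atTop (0:ℝ)] with h hh
      have hcont : ContinuousOn (F h) (Ioi 0) := by
        refine ContinuousOn.mul (ContinuousOn.mul (pbss_contOn α γ) ?_) continuousOn_const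
        exact (pbss_contOn α γ).comp ((continuous_id.add continuous_const).continuousOn)
          fun x (hx : (0:ℝ) < x) => show (0:ℝ) < x + h by linarith
      exact hcont.aestronglyMeasurable measurableSet_Ioi
    · filter_upwards [eventually_ge_atTop (1:ℝ)] with h hh
      refine (ae_restrict_iff' measurableSet_Ioi).2 (ae_of_all _ fun x hx => ?_)
      have hx0 : (0:ℝ) < x := hx
      have hh0 : (0:ℝ) < h := lt_of_lt_of_le one_pos hh
      have hxh : (0:ℝ) < x + h := by linarith
      have hgx : 0 ≤ g x := pbss_nonneg α γ hx0.le
      have hbound : g (x + h) * h ^ γ ≤ 1 := by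
        simp only [hg]
        rcases le_or_gt 0 α with hαpos | hαneg
        · have e1 : (x + h) ^ α ≤ (1 + (x + h)) ^ α :=
            Real.rpow_le_rpow hxh.le (by linarith) hαpos
          have e2 : (1 + (x + h)) ^ α * (1 + (x + h)) ^ (-γ - α) = (1 + (x + h)) ^ (-γ) := by
            rw [← Real.rpow_add (by linarith)]; ring_nf
          have e3 : (1 + (x + h)) ^ (-γ) ≤ h ^ (-γ) :=
            Real.rpow_le_rpow_of_nonpos hh0 (by linarith) (by linarith)
          calc (x + h) ^ α * (1 + (x + h)) ^ (-γ - α) * h ^ γ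
              ≤ (1 + (x + h)) ^ α * (1 + (x + h)) ^ (-γ - α) * h ^ γ := by
                have := mul_le_mul_of_nonneg_right e1
                  (Real.rpow_nonneg (by linarith : (0:ℝ) ≤ 1 + (x+h)) (-γ - α))
                exact mul_le_mul_of_nonneg_right this (Real.rpow_nonneg hh0.le _)
            _ = (1 + (x + h)) ^ (-γ) * h ^ γ := by rw [e2]
            _ ≤ h ^ (-γ) * h ^ γ :=
                mul_le_mul_of_nonneg_right e3 (Real.rpow_nonneg hh0.le _)
            _ = 1 := by rw [← Real.rpow_add hh0]; simp
        · have e1 : (x + h) ^ α ≤ h ^ α :=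
            Real.rpow_le_rpow_of_nonpos hh0 (by linarith) hαneg.le
          have e2 : (1 + (x + h)) ^ (-γ - α) ≤ h ^ (-γ - α) :=
            Real.rpow_le_rpow_of_nonpos hh0 (by linarith) hexp
          calc (x + h) ^ α * (1 + (x + h)) ^ (-γ - α) * h ^ γ
              ≤ h ^ α * h ^ (-γ - α) * h ^ γ := by
                have h1 := mul_le_mul e1 e2
                  (Real.rpow_nonneg (by linarith : (0:ℝ) ≤ 1 + (x+h)) _)
                  (Real.rpow_nonneg hh0.le _)
                exact mul_le_mul_of_nonneg_right h1 (Real.rpow_nonneg hh0.le _)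
            _ = 1 := by
                rw [← Real.rpow_add hh0, ← Real.rpow_add hh0,
                  show α + (-γ - α) + γ = 0 by ring, Real.rpow_zero]
      have hFnn : 0 ≤ F h x :=
        mul_nonneg (mul_nonneg hgx (pbss_nonneg α γ hxh.le)) (Real.rpow_nonneg hh0.le _)
      rw [Real.norm_eq_abs, abs_of_nonneg hFnn]
      calc F h x = g x * (g (x + h) * h ^ γ) := by ring
        _ ≤ g x * 1 := mul_le_mul_of_nonneg_left hbound hgx
        _ = g x := mul_one _
    · refine (ae_restrict_iff' measurableSet_Ioi).2 (ae_of_all _ fun x hx => ?_)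
      have hx0 : (0:ℝ) < x := hx
      have hlim : Tendsto (fun h : ℝ => g (x + h) * h ^ γ) atTop (nhds 1) := by
        have t1 : Tendsto (fun h : ℝ => (x + h) / h) atTop (nhds 1) := by
          have he : (fun h : ℝ => (x + h) / h) =ᶠ[atTop] fun h => x / h + 1 := by
            filter_upwards [eventually_gt_atTop (0:ℝ)] with h hh
            field_simp
          rw [tendsto_congr' he]
          simpa using (tendsto_const_nhds.div_atTop tendsto_id).add
            (tendsto_const_nhds (x := (1:ℝ)))
        have t2 : Tendsto (fun h : ℝ => (1 + (x + h)) / h) atTop (nhds 1) := by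
          have he : (fun h : ℝ => (1 + (x + h)) / h) =ᶠ[atTop] fun h => (1 + x) / h + 1 := by
            filter_upwards [eventually_gt_atTop (0:ℝ)] with h hh
            field_simp
            ring
          rw [tendsto_congr' he]
          simpa using (tendsto_const_nhds.div_atTop tendsto_id).add
            (tendsto_const_nhds (x := (1:ℝ)))
        have tprod : Tendsto (fun h : ℝ => ((x + h) / h) ^ α * ((1 + (x + h)) / h) ^ (-γ - α))
            atTop (nhds 1) := by
          have l1 := t1.rpow_const (p := α) (Or.inl one_ne_zero)
          have l2 := t2.rpow_const (p := -γ - α) (Or.inl one_ne_zero)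
          simpa using l1.mul l2
        refine tprod.congr' ?_
        filter_upwards [eventually_gt_atTop (0:ℝ)] with h hh
        have hxh : (0:ℝ) < x + h := by linarith
        have e : h ^ α * h ^ (-γ - α) = (h ^ γ)⁻¹ := by
          rw [← Real.rpow_add hh, show α + (-γ - α) = -γ by ring, Real.rpow_neg hh.le]
        rw [Real.div_rpow hxh.le hh.le, Real.div_rpow (by linarith) hh.le,
          div_mul_div_comm, e, div_inv_eq_mul]
      have hfin : Tendsto (fun h : ℝ => F h x) atTop (nhds (g x * 1)) := by
        simp only [hF]
        exact (tendsto_const_nhds.mul hlim).congr fun h => by ring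
      simpa using hfin
  -- conclude
  have hfinal : Tendsto (fun h => (∫ x in Ioi (0:ℝ), F h x) / C) atTop (nhds (C / C)) :=
    key.div_const C
  rw [div_self (ne_of_gt hCpos)] at hfinal
  refine hfinal.congr' ?_
  filter_upwards [eventually_gt_atTop (0:ℝ)] with h hh0
  have hmul : ∫ x in Ioi (0:ℝ), F h x = (∫ x in Ioi (0:ℝ), g x * g (x + h)) * h ^ γ := by
    simp only [hF]
    exact integral_mul_const _ _
  rw [hmul, Real.rpow_neg hh0.le]
  have hne : h ^ γ ≠ 0 := ne_of_gt (Real.rpow_pos_of_pos hh0 γ)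
  field_simp
  simp only [hg, mul_assoc]
end

section
/- Let α ∈ (-1/2, 1/2) and γ ∈ (1/2, 1), and let g be the power law kernel g(x) = x^α·(1+x)^{-γ-α} for x > 0. Then, as h → ∞, ∫₀^∞ g(x)·g(x+h) dx is asymptotically equivalent to (∫₀^∞ y^{-γ}(1+y)^{-γ} dy) · h^{1−2γ}, i.e. the ratio of the two sides tends to 1; in particular the autocorrelation of the Power-BSS model is not integrable (long memory). -/
open MeasureTheory Set Filter

section aux

variable {α γ : ℝ}

/-- `g x = x^(-γ) * (x/(1+x))^(γ+α)` for `x > 0`. -/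
lemma g_eq_aux {x : ℝ} (hx : 0 < x) :
    x ^ α * (1 + x) ^ (-γ - α) = x ^ (-γ) * (x / (1 + x)) ^ (γ + α) := by
  have h1 : (0:ℝ) < 1 + x := by linarith
  rw [Real.div_rpow hx.le h1.le, div_eq_mul_inv, ← Real.rpow_neg h1.le,
    ← mul_assoc, ← Real.rpow_add hx, show -γ + (γ + α) = α from by ring,
    show -(γ + α) = -γ - α from by ring]

lemma r_nonneg {x : ℝ} (hx : 0 < x) : 0 ≤ (x / (1 + x)) ^ (γ + α) :=
  Real.rpow_nonneg (by positivity) _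

lemma r_le_one {x : ℝ} (hx : 0 < x) (hγα : 0 ≤ γ + α) : (x / (1 + x)) ^ (γ + α) ≤ 1 := by
  apply Real.rpow_le_one (by positivity) _ hγα
  rw [div_le_one (by linarith)]; linarith

/-- integrability of `φ y = y^(-γ) (1+y)^(-γ)` on `(0,∞)`. -/
lemma phi_integrable (h1 : 1/2 < γ) (h2 : γ < 1) :
    IntegrableOn (fun y : ℝ => y ^ (-γ) * (1 + y) ^ (-γ)) (Ioi 0) := by
  have hmeas : AEStronglyMeasurable (fun y : ℝ => y ^ (-γ) * (1 + y) ^ (-γ))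
      (volume.restrict (Ioi (0:ℝ))) := by
    apply Measurable.aestronglyMeasurable
    fun_prop
  have hsplit : Ioi (0:ℝ) = Ioc 0 1 ∪ Ioi 1 := (Ioc_union_Ioi_eq_Ioi zero_le_one).symm
  rw [hsplit]
  apply IntegrableOn.union
  · -- on (0,1]: bounded by y^(-γ)
    have hint : IntegrableOn (fun y : ℝ => y ^ (-γ)) (Ioc 0 1) := by
      rw [← intervalIntegrable_iff_integrableOn_Ioc_of_le zero_le_one]
      exact intervalIntegral.intervalIntegrable_rpow' (by linarith)
    apply hint.mono' (hmeas.mono_measure (Measure.restrict_mono (by rw [hsplit]; exact subset_union_left) le_rfl))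
    filter_upwards [ae_restrict_mem measurableSet_Ioc] with y hy
    have hy0 : 0 < y := hy.1
    have h1y : (1:ℝ) ≤ 1 + y := by linarith
    rw [Real.norm_eq_abs, abs_of_nonneg (by positivity)]
    calc y ^ (-γ) * (1 + y) ^ (-γ) ≤ y ^ (-γ) * 1 := by
          apply mul_le_mul_of_nonneg_left (Real.rpow_le_one_of_one_le_of_nonpos h1y (by linarith))
          positivity
      _ = y ^ (-γ) := mul_one _
  · -- on (1,∞): bounded by y^(-2γ)
    have hint : IntegrableOn (fun y : ℝ => y ^ (-(2*γ))) (Ioi 1) :=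
      integrableOn_Ioi_rpow_of_lt (by linarith) one_pos
    apply hint.mono' (hmeas.mono_measure (Measure.restrict_mono (by rw [hsplit]; exact subset_union_right) le_rfl))
    filter_upwards [ae_restrict_mem measurableSet_Ioi] with y hy
    have hy0 : (0:ℝ) < y := lt_trans one_pos hy
    rw [Real.norm_eq_abs, abs_of_nonneg (by positivity)]
    calc y ^ (-γ) * (1 + y) ^ (-γ) ≤ y ^ (-γ) * y ^ (-γ) := by
          apply mul_le_mul_of_nonneg_left
            (Real.rpow_le_rpow_of_nonpos hy0 (by linarith) (by linarith))
          positivity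
      _ = y ^ (-(2*γ)) := by rw [← Real.rpow_add hy0]; ring_nf

/-- `x/(1+x) → 1` at infinity. -/
lemma tendsto_div_one_add : Tendsto (fun x : ℝ => x / (1 + x)) atTop (nhds 1) := by
  have hEq : (fun x : ℝ => x / (1 + x)) =ᶠ[atTop] (fun x => 1 - (1 + x)⁻¹) := by
    filter_upwards [eventually_gt_atTop 0] with x hx
    field_simp
    ring
  apply Tendsto.congr' hEq.symm
  have : Tendsto (fun x : ℝ => (1 + x)⁻¹) atTop (nhds 0) :=
    ((tendsto_atTop_add_const_left atTop 1 tendsto_id).inv_tendsto_atTop)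
  simpa using (tendsto_const_nhds (x := (1:ℝ))).sub this

end aux

/-- Power law kernel, case γ ∈ (1/2,1): for `g(x) = x^α (1+x)^(-γ-α)`,
`∫₀^∞ g(x) g(x+h) dx ~ (∫₀^∞ y^(-γ)(1+y)^(-γ)dy) · h^(1-2γ)` as `h → ∞`;
in particular the autocovariance is not integrable (long memory). -/
theorem power_bss_acf_asymptotics_long_memory
    (α γ : ℝ) (hα : α ∈ Ioo (-(1:ℝ)/2) (1/2)) (hγ : γ ∈ Ioo (1/2 : ℝ) 1) :
    Tendsto
      (fun h =>
        (∫ x in Ioi (0:ℝ),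
            (x ^ α * (1 + x) ^ (-γ - α)) * ((x + h) ^ α * (1 + (x + h)) ^ (-γ - α))) /
          ((∫ y in Ioi (0:ℝ), y ^ (-γ) * (1 + y) ^ (-γ)) * h ^ (1 - 2 * γ)))
      atTop (nhds 1)
    ∧ ¬ IntegrableOn
        (fun h => ∫ x in Ioi (0:ℝ),
          (x ^ α * (1 + x) ^ (-γ - α)) * ((x + h) ^ α * (1 + (x + h)) ^ (-γ - α)))
        (Ioi 0) := by
  obtain ⟨hα1, hα2⟩ := hα
  obtain ⟨hγ1, hγ2⟩ := hγ
  have hγα : 0 < γ + α := by linarith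
  set g : ℝ → ℝ := fun x => x ^ α * (1 + x) ^ (-γ - α) with hg
  set r : ℝ → ℝ := fun x => (x / (1 + x)) ^ (γ + α) with hr
  set φ : ℝ → ℝ := fun y => y ^ (-γ) * (1 + y) ^ (-γ) with hφ
  set F : ℝ → ℝ := fun h => ∫ x in Ioi (0:ℝ), g x * g (x + h) with hF
  set C : ℝ := ∫ y in Ioi (0:ℝ), φ y with hC
  have hφint : IntegrableOn φ (Ioi 0) := phi_integrable hγ1 hγ2
  -- C > 0
  have hCpos : 0 < C := by
    have hnn : 0 ≤ᵐ[volume.restrict (Ioi (0:ℝ))] φ := by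
      filter_upwards [ae_restrict_mem measurableSet_Ioi] with y hy
      have : (0:ℝ) < y := hy
      positivity
    rw [hC, setIntegral_pos_iff_support_of_nonneg_ae hnn hφint]
    have hsub : Ioi (0:ℝ) ⊆ Function.support φ ∩ Ioi 0 := by
      intro y hy
      refine ⟨?_, hy⟩
      have hy0 : (0:ℝ) < y := hy
      simp only [hφ, Function.mem_support]
      positivity
    calc (0:ENNReal) < volume (Ioi (0:ℝ)) := by simp
      _ ≤ volume (Function.support φ ∩ Ioi 0) := measure_mono hsub
  -- key identity: for h > 0, h^(2γ-1) * F h = ∫ ψ h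
  set ψ : ℝ → ℝ → ℝ := fun h y => Real.exp ((2*γ) * Real.log h) * (g (h * y) * g (h * y + h))
    with hψ
  -- Instead use rpow directly
  have key : ∀ h : ℝ, 0 < h →
      ∫ y in Ioi (0:ℝ), h ^ (2*γ) * (g (h * y) * g (h * y + h)) = h ^ (2*γ - 1) * F h := by
    intro h hh
    rw [integral_const_mul]
    have := integral_comp_mul_left_Ioi (fun x => g x * g (x + h)) 0 hh
    simp only [mul_zero, smul_eq_mul] at this
    rw [this, ← mul_assoc, ← Real.rpow_neg_one h, ← Real.rpow_add hh,
      show 2*γ + -1 = 2*γ - 1 from by ring, hF]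
  -- pointwise form of the integrand
  have integrand_eq : ∀ h : ℝ, 0 < h → ∀ y : ℝ, 0 < y →
      h ^ (2*γ) * (g (h * y) * g (h * y + h)) = φ y * (r (h * y) * r (h * (1 + y))) := by
    intro h hh y hy
    have hhy : 0 < h * y := by positivity
    have hhy' : 0 < h * (1 + y) := by positivity
    have e1 : g (h * y) = (h*y) ^ (-γ) * r (h*y) := g_eq_aux hhy
    have e2 : g (h * y + h) = (h*(1+y)) ^ (-γ) * r (h*(1+y)) := by
      rw [show h * y + h = h * (1 + y) by ring]; exact g_eq_aux hhy'
    rw [e1, e2, Real.mul_rpow hh.le hy.le, Real.mul_rpow hh.le (by linarith : (0:ℝ) ≤ 1 + y)]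
    have hpow : h ^ (2*γ) * (h ^ (-γ) * h ^ (-γ)) = 1 := by
      rw [← Real.rpow_add hh, ← Real.rpow_add hh,
        show 2*γ + (-γ + -γ) = 0 from by ring, Real.rpow_zero]
    calc h ^ (2*γ) * (h ^ (-γ) * y ^ (-γ) * r (h * y) * (h ^ (-γ) * (1+y) ^ (-γ) * r (h * (1+y))))
        = (h ^ (2*γ) * (h ^ (-γ) * h ^ (-γ))) * (y ^ (-γ) * (1+y) ^ (-γ) * (r (h*y) * r (h*(1+y)))) := by ring
      _ = φ y * (r (h * y) * r (h * (1 + y))) := by rw [hpow, one_mul, hφ, mul_assoc]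
  -- dominated convergence
  have hDCT : Tendsto (fun h => ∫ y in Ioi (0:ℝ), h ^ (2*γ) * (g (h * y) * g (h * y + h)))
      atTop (nhds C) := by
    rw [hC]
    apply tendsto_integral_filter_of_dominated_convergence φ
    · filter_upwards [eventually_gt_atTop (0:ℝ)] with h hh
      apply Measurable.aestronglyMeasurable
      simp only [hg]
      fun_prop
    · filter_upwards [eventually_gt_atTop (0:ℝ)] with h hh
      filter_upwards [ae_restrict_mem measurableSet_Ioi] with y hy
      have hy0 : (0:ℝ) < y := hy
      rw [integrand_eq h hh y hy0]
      have h1 : 0 ≤ r (h*y) := r_nonneg (by positivity)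
      have h2 : 0 ≤ r (h*(1+y)) := r_nonneg (by positivity)
      have h3 : r (h*y) ≤ 1 := r_le_one (by positivity) hγα.le
      have h4 : r (h*(1+y)) ≤ 1 := r_le_one (by positivity) hγα.le
      have hφpos : 0 < φ y := by simp only [hφ]; positivity
      rw [Real.norm_eq_abs, abs_of_nonneg (by positivity)]
      calc φ y * (r (h*y) * r (h*(1+y))) ≤ φ y * (1 * 1) := by
            apply mul_le_mul_of_nonneg_left _ hφpos.le
            exact mul_le_mul h3 h4 h2 zero_le_one
        _ = φ y := by ring
    · exact hφint
    · filter_upwards [ae_restrict_mem measurableSet_Ioi] with y hy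
      have hy0 : (0:ℝ) < y := hy
      have heq : ∀ᶠ h : ℝ in atTop, h ^ (2*γ) * (g (h * y) * g (h * y + h))
          = φ y * (r (h * y) * r (h * (1 + y))) := by
        filter_upwards [eventually_gt_atTop (0:ℝ)] with h hh
        exact integrand_eq h hh y hy0
      rw [tendsto_congr' heq]
      have hr1 : Tendsto (fun h : ℝ => r (h * y)) atTop (nhds 1) := by
        have : Tendsto (fun h : ℝ => h * y) atTop atTop :=
          Tendsto.atTop_mul_const hy0 tendsto_id
        have := (tendsto_div_one_add.comp this)
        have hcont : Tendsto (fun t : ℝ => t ^ (γ + α)) (nhds 1) (nhds 1) := by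
          have := (Real.continuousAt_rpow_const 1 (γ+α) (Or.inl one_ne_zero))
          simpa using this.tendsto
        simpa [hr, Function.comp_def] using hcont.comp this
      have hr2 : Tendsto (fun h : ℝ => r (h * (1 + y))) atTop (nhds 1) := by
        have : Tendsto (fun h : ℝ => h * (1 + y)) atTop atTop :=
          Tendsto.atTop_mul_const (by linarith) tendsto_id
        have := (tendsto_div_one_add.comp this)
        have hcont : Tendsto (fun t : ℝ => t ^ (γ + α)) (nhds 1) (nhds 1) := by
          have := (Real.continuousAt_rpow_const 1 (γ+α) (Or.inl one_ne_zero))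
          simpa using this.tendsto
        simpa [hr, Function.comp_def] using hcont.comp this
      have : Tendsto (fun h : ℝ => φ y * (r (h * y) * r (h * (1 + y)))) atTop
          (nhds (φ y * (1 * 1))) := tendsto_const_nhds.mul (hr1.mul hr2)
      simpa using this
  -- hence Tendsto (fun h => h^(2γ-1) * F h) atTop (nhds C)
  have hT : Tendsto (fun h : ℝ => h ^ (2*γ - 1) * F h) atTop (nhds C) := by
    apply hDCT.congr'
    filter_upwards [eventually_gt_atTop (0:ℝ)] with h hh
    exact key h hh
  -- main tendsto statement
  have main : Tendsto (fun h : ℝ => F h / (C * h ^ (1 - 2*γ))) atTop (nhds 1) := by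
    have := hT.div_const C
    rw [div_self hCpos.ne'] at this
    apply this.congr'
    filter_upwards [eventually_gt_atTop (0:ℝ)] with h hh
    rw [show (1 - 2*γ) = -(2*γ - 1) by ring, Real.rpow_neg hh.le]
    have hpow : (0:ℝ) < h ^ (2*γ-1) := Real.rpow_pos_of_pos hh _
    field_simp
  have main' : Tendsto
      (fun h =>
        (∫ x in Ioi (0:ℝ),
            (x ^ α * (1 + x) ^ (-γ - α)) * ((x + h) ^ α * (1 + (x + h)) ^ (-γ - α))) /
          ((∫ y in Ioi (0:ℝ), y ^ (-γ) * (1 + y) ^ (-γ)) * h ^ (1 - 2 * γ)))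
      atTop (nhds 1) := main
  refine ⟨main', ?_⟩
  -- non-integrability
  intro hInt
  -- eventually F h ≥ (C/2) * h^(1-2γ)
  have hev : ∀ᶠ h : ℝ in atTop, C/2 * h ^ (1 - 2*γ) ≤ F h := by
    have h2 : ∀ᶠ h : ℝ in atTop, (1:ℝ)/2 < F h / (C * h ^ (1 - 2*γ)) :=
      main.eventually_const_lt (by norm_num)
    filter_upwards [h2, eventually_gt_atTop (0:ℝ)] with h hh hh0
    have hden : 0 < C * h ^ (1 - 2*γ) := by
      apply mul_pos hCpos (Real.rpow_pos_of_pos hh0 _)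
    rw [lt_div_iff₀ hden] at hh
    nlinarith [hh]
  obtain ⟨M, hM⟩ := hev.exists_forall_of_atTop
  set M' : ℝ := max M 1 with hM'
  have hM'pos : (0:ℝ) < M' := lt_of_lt_of_le one_pos (le_max_right _ _)
  have hIntM : IntegrableOn F (Ioi M') := hInt.mono (Ioi_subset_Ioi hM'pos.le) le_rfl
  have hrint : IntegrableOn (fun h : ℝ => C/2 * h ^ (1 - 2*γ)) (Ioi M') := by
    apply hIntM.mono'
    · apply Measurable.aestronglyMeasurable
      fun_prop
    · filter_upwards [ae_restrict_mem measurableSet_Ioi] with h hh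
      have hh0 : (0:ℝ) < h := lt_trans hM'pos hh
      have hle : C/2 * h ^ (1 - 2*γ) ≤ F h := hM h (le_trans (le_max_left _ _) hh.le)
      have hnn : 0 ≤ C/2 * h ^ (1 - 2*γ) := by
        apply mul_nonneg (by linarith) (Real.rpow_nonneg hh0.le _)
      simp only [Real.norm_eq_abs]
      rw [abs_of_nonneg hnn]
      exact hle
  have : IntegrableOn (fun h : ℝ => h ^ (1 - 2*γ)) (Ioi M') := by
    have h2 : IntegrableOn (fun h : ℝ => 2/C * (C/2 * h ^ (1 - 2*γ))) (Ioi M') :=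
      hrint.const_mul _
    apply h2.congr_fun _ measurableSet_Ioi
    intro h hh
    have hc : 2/C*(C/2) = 1 := by field_simp
    simp only
    rw [← mul_assoc, hc, one_mul]
  rw [integrableOn_Ioi_rpow_iff hM'pos] at this
  linarith
end

section
/- Let γ₀ > 0, α ∈ (-1/2, 1/2), c > 0, and let L₀ : (0,∞) → ℝ be slowly varying at zero. Let ρ_X : ℝ → ℝ satisfy 1 − ρ_X(h) ~ c·h^{2α+1}·L₀(h) as h ↓ 0 (in particular ρ_X(h) → 1 and ρ_X(h) ≠ 1 for all sufficiently small h > 0). Define ρ(h) = (exp(γ₀·ρ_X(h)) − 1)/(exp(γ₀) − 1); this is the autocorrelation function of the lognormal process σ_t = ξ·exp(X_t) when X is a stationary zero-mean Gaussian process with variance γ₀ and autocorrelation ρ_X. Then, as h ↓ 0, 1 − ρ(h) is asymptotically equivalent to [γ₀·e^{γ₀}/(e^{γ₀} − 1)] · c · h^{2α+1} · L₀(h); in particular the exponentiated (raw volatility) process inherits the roughness index α of the log volatility process. -/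
open MeasureTheory Set Filter

/-- Theorem 2(i): the exponentiated (raw volatility) process inherits the roughness index of the
log volatility process. If `1 - ρ_X(h) ~ c h^(2α+1) L₀(h)` as `h ↓ 0`, then the lognormal
autocorrelation `ρ(h) = (exp(γ₀ ρ_X(h)) - 1)/(exp(γ₀) - 1)` satisfies
`1 - ρ(h) ~ (γ₀ e^γ₀/(e^γ₀ - 1)) c h^(2α+1) L₀(h)` as `h ↓ 0`. -/
theorem lognormal_inherits_roughness
    (γ₀ α c : ℝ) (hγ₀ : 0 < γ₀) (hα : α ∈ Ioo (-(1:ℝ)/2) (1/2)) (hc : 0 < c)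
    (L₀ ρX : ℝ → ℝ)
    (hL₀_slow : ∀ t > (0:ℝ),
      Tendsto (fun x => L₀ (t * x) / L₀ x) (nhdsWithin 0 (Ioi 0)) (nhds 1))
    (hrough : Tendsto (fun h => (1 - ρX h) / (c * h ^ (2 * α + 1) * L₀ h))
      (nhdsWithin 0 (Ioi 0)) (nhds 1))
    (hlim : Tendsto ρX (nhdsWithin 0 (Ioi 0)) (nhds 1))
    (hne : ∀ᶠ h in nhdsWithin 0 (Ioi 0), ρX h ≠ 1) :
    Tendsto
      (fun h => (1 - (Real.exp (γ₀ * ρX h) - 1) / (Real.exp γ₀ - 1)) /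
        ((γ₀ * Real.exp γ₀ / (Real.exp γ₀ - 1)) * c * h ^ (2 * α + 1) * L₀ h))
      (nhdsWithin 0 (Ioi 0)) (nhds 1) := by
  have hexp1 : (1:ℝ) < Real.exp γ₀ := by
    calc (1:ℝ) = Real.exp 0 := by simp
    _ < Real.exp γ₀ := Real.exp_lt_exp.mpr hγ₀
  have hE : Real.exp γ₀ - 1 ≠ 0 := by linarith
  have hEne : Real.exp γ₀ ≠ 0 := (Real.exp_pos _).ne'
  -- (exp t - 1)/t → 1 as t → 0 (punctured)
  have hslope : Tendsto (fun t : ℝ => (Real.exp t - 1) / t) (nhdsWithin 0 {(0:ℝ)}ᶜ) (nhds 1) := by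
    have h := Real.hasDerivAt_exp 0
    rw [hasDerivAt_iff_tendsto_slope] at h
    simpa [slope_fun_def, Real.exp_zero, div_eq_inv_mul] using h
  -- (1 - exp (-t))/t → 1 as t → 0 (punctured)
  have hA : Tendsto (fun t : ℝ => (1 - Real.exp (-t)) / t) (nhdsWithin 0 {(0:ℝ)}ᶜ) (nhds 1) := by
    have hneg : Tendsto (fun t : ℝ => -t) (nhdsWithin 0 {(0:ℝ)}ᶜ) (nhdsWithin 0 {(0:ℝ)}ᶜ) := by
      refine tendsto_nhdsWithin_of_tendsto_nhds_of_eventually_within _ ?_ ?_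
      · simpa using ((tendsto_id : Tendsto id (nhds (0:ℝ)) (nhds 0)).neg).mono_left nhdsWithin_le_nhds
      · filter_upwards [self_mem_nhdsWithin] with t ht
        simpa using ht
    have := hslope.comp hneg
    refine this.congr fun t => ?_
    simp only [Function.comp]
    rw [div_neg, ← neg_div, neg_sub]
  set l := nhdsWithin (0:ℝ) (Ioi 0)
  -- u h = γ₀ (1 - ρX h) → 0 punctured
  have hu0 : Tendsto (fun h => γ₀ * (1 - ρX h)) l (nhds 0) := by
    have : Tendsto (fun h => 1 - ρX h) l (nhds 0) := by
      simpa using ((tendsto_const_nhds : Tendsto (fun _ => (1:ℝ)) l (nhds 1)).sub hlim)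
    simpa using this.const_mul γ₀
  have hu : Tendsto (fun h => γ₀ * (1 - ρX h)) l (nhdsWithin 0 {(0:ℝ)}ᶜ) := by
    rw [tendsto_nhdsWithin_iff]
    refine ⟨hu0, ?_⟩
    filter_upwards [hne] with h hh
    simp only [mem_compl_iff, mem_singleton_iff]
    intro habs
    rcases mul_eq_zero.mp habs with h1 | h2
    · exact hγ₀.ne' h1
    · exact hh (by linarith)
  have hA' : Tendsto (fun h => (1 - Real.exp (-(γ₀ * (1 - ρX h)))) / (γ₀ * (1 - ρX h)))
      l (nhds 1) := hA.comp hu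
  have hmul := hA'.mul hrough
  rw [one_mul] at hmul
  refine hmul.congr' ?_
  filter_upwards [hne, self_mem_nhdsWithin] with h hh hpos
  have hρ : 1 - ρX h ≠ 0 := fun habs => hh (by linarith)
  have hhp : h ^ (2 * α + 1) ≠ 0 := (Real.rpow_pos_of_pos hpos _).ne'
  have hexps : Real.exp (-(γ₀ * (1 - ρX h))) = Real.exp (γ₀ * ρX h) / Real.exp γ₀ := by
    rw [← Real.exp_sub]; ring_nf
  rw [hexps]
  by_cases hL : L₀ h = 0
  · simp [hL]
  · field_simp
    ring
end

section
/- Let Δ > 0, let a, a′ ∈ ℝ, c, c′ > 0, and α, α′ ∈ (-1/2, 1/2). If a + c·(kΔ)^{2α+1} = a′ + c′·(kΔ)^{2α′+1} holds for k = 1, 2, 3, then a = a′, c = c′, and α = α′. Consequently, for any bandwidth m ≥ 3 the population NLLS criterion Q(a, c, α) = Σ_{k=1}^m (a₀ + c₀·(kΔ)^{2α₀+1} − a − c·(kΔ)^{2α+1})², with c₀ > 0 and α₀ ∈ (-1/2, 1/2), has (a₀, c₀, α₀) as its unique zero, hence its unique minimizer, among parameters with c > 0. -/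
open Set

private lemma nlls_key (Δ c c' β γ : ℝ) (hΔ : 0 < Δ) (hc : 0 < c) (hc' : 0 < c')
    (hγ : 0 < γ) (hβγ : γ < β)
    (h1 : c * Δ ^ β - c' * Δ ^ γ = c * (2 * Δ) ^ β - c' * (2 * Δ) ^ γ)
    (h2 : c * (2 * Δ) ^ β - c' * (2 * Δ) ^ γ = c * (3 * Δ) ^ β - c' * (3 * Δ) ^ γ) :
    False := by
  have hβ : 0 < β := hγ.trans hβγ
  set f : ℝ → ℝ := fun x => c * x ^ β - c' * x ^ γ with hf
  set f' : ℝ → ℝ := fun x => c * (β * x ^ (β - 1)) - c' * (γ * x ^ (γ - 1)) with hf'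
  have hderiv : ∀ x : ℝ, 0 < x → HasDerivAt f (f' x) x := by
    intro x hx
    exact ((Real.hasDerivAt_rpow_const (Or.inl hx.ne')).const_mul c).sub
      ((Real.hasDerivAt_rpow_const (Or.inl hx.ne')).const_mul c')
  have hcont : ∀ s : Set ℝ, (∀ x ∈ s, 0 < x) → ContinuousOn f s := by
    intro s hs x hx
    exact (hderiv x (hs x hx)).continuousAt.continuousWithinAt
  have hroll1 : ∃ x ∈ Ioo Δ (2 * Δ), f' x = 0 := by
    apply exists_hasDerivAt_eq_zero (by linarith)
      (hcont (Icc Δ (2 * Δ)) (fun x hx => lt_of_lt_of_le hΔ hx.1))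
      (by simpa [hf] using h1)
      (fun x hx => hderiv x (hΔ.trans hx.1))
  have hroll2 : ∃ x ∈ Ioo (2 * Δ) (3 * Δ), f' x = 0 := by
    apply exists_hasDerivAt_eq_zero (by linarith)
      (hcont (Icc (2 * Δ) (3 * Δ)) (fun x hx => lt_of_lt_of_le (by linarith) hx.1))
      (by simpa [hf] using h2)
      (fun x hx => hderiv x (by have := hx.1; linarith))
  obtain ⟨x₁, hx₁mem, hx₁⟩ := hroll1
  obtain ⟨x₂, hx₂mem, hx₂⟩ := hroll2
  have hx₁pos : 0 < x₁ := hΔ.trans hx₁mem.1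
  have hx₂pos : 0 < x₂ := by have := hx₂mem.1; linarith
  have key' : ∀ x : ℝ, 0 < x → f' x = 0 → c * β * x ^ (β - γ) = c' * γ := by
    intro x hx h
    have e1 : x ^ (β - 1) * x ^ (1 - γ) = x ^ (β - γ) := by
      rw [← Real.rpow_add hx]; ring_nf
    have e2 : x ^ (γ - 1) * x ^ (1 - γ) = 1 := by
      rw [← Real.rpow_add hx]; norm_num
    have h' : c * (β * x ^ (β - 1)) = c' * (γ * x ^ (γ - 1)) := by
      have : c * (β * x ^ (β - 1)) - c' * (γ * x ^ (γ - 1)) = 0 := h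
      linarith
    calc c * β * x ^ (β - γ) = c * (β * x ^ (β - 1)) * x ^ (1 - γ) := by rw [← e1]; ring
      _ = c' * (γ * x ^ (γ - 1)) * x ^ (1 - γ) := by rw [h']
      _ = c' * γ * (x ^ (γ - 1) * x ^ (1 - γ)) := by ring
      _ = c' * γ := by rw [e2]; ring
  have k1 := key' x₁ hx₁pos hx₁
  have k2 := key' x₂ hx₂pos hx₂
  have hlt : x₁ ^ (β - γ) < x₂ ^ (β - γ) := by
    apply Real.rpow_lt_rpow hx₁pos.le _ (by linarith)
    have := hx₁mem.2; have := hx₂mem.1; linarith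
  have hcβ : 0 < c * β := mul_pos hc hβ
  nlinarith [hlt, hcβ]

/-- Identification for the NLLS criterion: if `a + c (kΔ)^(2α+1) = a' + c' (kΔ)^(2α'+1)` for
`k = 1, 2, 3`, then `(a, c, α) = (a', c', α')`. Consequently, for any bandwidth `m ≥ 3` the
population NLLS criterion `Q(a,c,α) = Σ_{k=1}^m (a₀ + c₀ (kΔ)^(2α₀+1) - a - c (kΔ)^(2α+1))²`
has `(a₀, c₀, α₀)` as its unique zero, hence unique minimizer, among parameters with `c > 0`. -/
theorem nlls_identification
    (Δ : ℝ) (hΔ : 0 < Δ) :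
    (∀ a a' c c' α α' : ℝ, 0 < c → 0 < c' →
      α ∈ Ioo (-(1:ℝ)/2) (1/2) → α' ∈ Ioo (-(1:ℝ)/2) (1/2) →
      (∀ k : ℕ, 1 ≤ k → k ≤ 3 →
        a + c * ((k : ℝ) * Δ) ^ (2 * α + 1) = a' + c' * ((k : ℝ) * Δ) ^ (2 * α' + 1)) →
      a = a' ∧ c = c' ∧ α = α') ∧
    (∀ m : ℕ, 3 ≤ m → ∀ a₀ c₀ α₀ : ℝ, 0 < c₀ → α₀ ∈ Ioo (-(1:ℝ)/2) (1/2) →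
      (∑ k ∈ Finset.Icc 1 m,
          (a₀ + c₀ * ((k : ℝ) * Δ) ^ (2 * α₀ + 1)
            - a₀ - c₀ * ((k : ℝ) * Δ) ^ (2 * α₀ + 1)) ^ 2) = 0 ∧
      ∀ a c α : ℝ, 0 < c → α ∈ Ioo (-(1:ℝ)/2) (1/2) → (a, c, α) ≠ (a₀, c₀, α₀) →
        0 < ∑ k ∈ Finset.Icc 1 m,
          (a₀ + c₀ * ((k : ℝ) * Δ) ^ (2 * α₀ + 1)
            - a - c * ((k : ℝ) * Δ) ^ (2 * α + 1)) ^ 2) := by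
  have part1 : ∀ a a' c c' α α' : ℝ, 0 < c → 0 < c' →
      α ∈ Ioo (-(1:ℝ)/2) (1/2) → α' ∈ Ioo (-(1:ℝ)/2) (1/2) →
      (∀ k : ℕ, 1 ≤ k → k ≤ 3 →
        a + c * ((k : ℝ) * Δ) ^ (2 * α + 1) = a' + c' * ((k : ℝ) * Δ) ^ (2 * α' + 1)) →
      a = a' ∧ c = c' ∧ α = α' := by
    intro a a' c c' α α' hc hc' hα hα' heq
    have hβ : 0 < 2 * α + 1 := by have := hα.1; linarith
    have hγ : 0 < 2 * α' + 1 := by have := hα'.1; linarith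
    have e1 : a + c * Δ ^ (2 * α + 1) = a' + c' * Δ ^ (2 * α' + 1) := by
      have := heq 1 le_rfl (by norm_num); norm_num at this; exact this
    have e2 : a + c * (2 * Δ) ^ (2 * α + 1) = a' + c' * (2 * Δ) ^ (2 * α' + 1) := by
      have := heq 2 (by norm_num) (by norm_num); norm_num at this; exact this
    have e3 : a + c * (3 * Δ) ^ (2 * α + 1) = a' + c' * (3 * Δ) ^ (2 * α' + 1) := by
      have := heq 3 (by norm_num) le_rfl; norm_num at this; exact this
    rcases lt_trichotomy α α' with hlt | heqα | hgt
    · exact absurd (nlls_key Δ c' c (2 * α' + 1) (2 * α + 1) hΔ hc' hc hβ (by linarith)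
        (by linarith) (by linarith)) id
    · subst heqα
      have hrpowlt : Δ ^ (2 * α + 1) < (2 * Δ) ^ (2 * α + 1) :=
        Real.rpow_lt_rpow hΔ.le (by linarith) hβ
      have hpos : (0:ℝ) < Δ ^ (2 * α + 1) := Real.rpow_pos_of_pos hΔ _
      have h0 : (c - c') * (Δ ^ (2 * α + 1) - (2 * Δ) ^ (2 * α + 1)) = 0 := by
        linear_combination e1 - e2
      have hcc : c = c' := by
        rcases mul_eq_zero.mp h0 with h | h
        · linarith
        · linarith
      subst hcc
      exact ⟨by linarith, rfl, rfl⟩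
    · exact absurd (nlls_key Δ c c' (2 * α + 1) (2 * α' + 1) hΔ hc hc' hγ (by linarith)
        (by linarith) (by linarith)) id
  refine ⟨part1, ?_⟩
  intro m hm a₀ c₀ α₀ hc₀ hα₀
  constructor
  · exact Finset.sum_eq_zero fun k _ => by ring
  · intro a c α hc hα hne
    have hnn : ∀ k ∈ Finset.Icc 1 m,
        (0:ℝ) ≤ (a₀ + c₀ * ((k : ℝ) * Δ) ^ (2 * α₀ + 1)
          - a - c * ((k : ℝ) * Δ) ^ (2 * α + 1)) ^ 2 := fun k _ => sq_nonneg _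
    by_contra hnp
    push_neg at hnp
    have hz : (∑ k ∈ Finset.Icc 1 m,
        (a₀ + c₀ * ((k : ℝ) * Δ) ^ (2 * α₀ + 1)
          - a - c * ((k : ℝ) * Δ) ^ (2 * α + 1)) ^ 2) = 0 :=
      le_antisymm hnp (Finset.sum_nonneg hnn)
    have hall := (Finset.sum_eq_zero_iff_of_nonneg hnn).mp hz
    have heq : ∀ k : ℕ, 1 ≤ k → k ≤ 3 →
        a₀ + c₀ * ((k : ℝ) * Δ) ^ (2 * α₀ + 1) = a + c * ((k : ℝ) * Δ) ^ (2 * α + 1) := by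
      intro k hk1 hk3
      have hk : k ∈ Finset.Icc 1 m := Finset.mem_Icc.mpr ⟨hk1, hk3.trans hm⟩
      have h0 := (pow_eq_zero_iff two_ne_zero).mp (hall k hk)
      linarith
    obtain ⟨ha, hcc, hαα⟩ := part1 a₀ a c₀ c α₀ α hc₀ hc hα₀ hα heq
    exact hne (by rw [← ha, ← hcc, ← hαα])
end

section
/- Let (Ω, 𝔉, P) be a probability space, m ≥ 1 an integer, Δ > 0, and Θ a nonempty compact subset of ℝ × ℝ × (-1/2, 1/2). Let g₁, …, g_m be real numbers and, for each n, let ĝ_{n,1}, …, ĝ_{n,m} be random variables such that ĝ_{n,k} → g_k in probability as n → ∞ for each k = 1, …, m. Define the random function Q_n(ω, θ) = Σ_{k=1}^m (ĝ_{n,k}(ω) − a − c·(kΔ)^{2α+1})² and the deterministic function Q(θ) = Σ_{k=1}^m (g_k − a − c·(kΔ)^{2α+1})² for θ = (a, c, α) ∈ Θ. Then sup_{θ ∈ Θ} |Q_n(ω, θ) − Q(θ)| → 0 in probability as n → ∞ (the supremum being a well-defined random variable since Q_n(ω, ·) − Q(·) is continuous on the compact set Θ). -/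
open MeasureTheory Set Filter

/-- Uniform convergence in probability of the empirical NLLS criterion: if
`ĝ_{n,k} → g_k` in probability for each `k = 1, …, m`, then
`sup_{θ ∈ Θ} |Q_n(ω,θ) - Q(θ)| → 0` in probability, where
`Q_n(ω,θ) = Σ_k (ĝ_{n,k}(ω) - a - c (kΔ)^(2α+1))²` and
`Q(θ) = Σ_k (g_k - a - c (kΔ)^(2α+1))²`, `θ = (a, c, α) ∈ Θ` compact. -/
theorem nlls_criterion_uniform_convergence
    {Ω : Type*} [MeasurableSpace Ω] (P : Measure Ω) [IsProbabilityMeasure P]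
    (m : ℕ) (hm : 1 ≤ m) (Δ : ℝ) (hΔ : 0 < Δ)
    (Θ : Set (ℝ × ℝ × ℝ)) (hΘne : Θ.Nonempty) (hΘcpt : IsCompact Θ)
    (hΘsub : ∀ θ ∈ Θ, θ.2.2 ∈ Ioo (-(1:ℝ)/2) (1/2))
    (gbar : Fin m → ℝ) (ghat : ℕ → Fin m → Ω → ℝ)
    (hmeas : ∀ n k, Measurable (ghat n k))
    (hconv : ∀ k : Fin m, ∀ ε > (0:ℝ),
      Tendsto (fun n => P {ω | ε < |ghat n k ω - gbar k|}) atTop (nhds 0)) :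
    ∀ ε > (0:ℝ),
      Tendsto
        (fun n => P {ω | ε <
          sSup ((fun θ : ℝ × ℝ × ℝ =>
            |(∑ k : Fin m,
                (ghat n k ω - θ.1
                  - θ.2.1 * ((((k : ℕ) : ℝ) + 1) * Δ) ^ (2 * θ.2.2 + 1)) ^ 2)
              - ∑ k : Fin m,
                (gbar k - θ.1
                  - θ.2.1 * ((((k : ℕ) : ℝ) + 1) * Δ) ^ (2 * θ.2.2 + 1)) ^ 2|) '' Θ)})
        atTop (nhds 0) := by
  intro ε hε
  -- base of the power is positive
  have ht : ∀ k : Fin m, (0:ℝ) < (((k : ℕ) : ℝ) + 1) * Δ := by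
    intro k
    have : (0:ℝ) ≤ ((k : ℕ) : ℝ) := Nat.cast_nonneg _
    nlinarith
  -- continuity of the deterministic residuals on Θ
  have hcont : ∀ k : Fin m, ContinuousOn
      (fun θ : ℝ × ℝ × ℝ =>
        gbar k - θ.1 - θ.2.1 * ((((k : ℕ) : ℝ) + 1) * Δ) ^ (2 * θ.2.2 + 1)) Θ := by
    intro k
    have hpow : Continuous fun θ : ℝ × ℝ × ℝ =>
        ((((k : ℕ) : ℝ) + 1) * Δ) ^ (2 * θ.2.2 + 1) := by
      apply Continuous.rpow continuous_const
      · exact (continuous_const.mul (continuous_snd.comp continuous_snd)).add continuous_const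
      · intro x; exact Or.inl (ht k).ne'
    exact ((continuous_const.sub continuous_fst).sub
      ((continuous_fst.comp continuous_snd).mul hpow)).continuousOn
  -- bounds for the residuals on the compact Θ
  have hMk : ∀ k : Fin m, ∃ M : ℝ, ∀ θ ∈ Θ,
      |gbar k - θ.1 - θ.2.1 * ((((k : ℕ) : ℝ) + 1) * Δ) ^ (2 * θ.2.2 + 1)| ≤ M := by
    intro k
    obtain ⟨M, hM⟩ := hΘcpt.exists_bound_of_continuousOn (hcont k)
    exact ⟨M, fun θ hθ => by simpa [Real.norm_eq_abs] using hM θ hθ⟩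
  choose M hM using hMk
  set C : ℝ := ∑ k : Fin m, (1 + 2 * max (M k) 0) with hCdef
  have hCpos : 0 < C := by
    apply Finset.sum_pos
    · intro k _
      have := le_max_right (M k) (0:ℝ)
      nlinarith
    · exact ⟨⟨0, hm⟩, Finset.mem_univ _⟩
  set δ : ℝ := min 1 (ε / C) with hδdef
  have hδpos : 0 < δ := lt_min one_pos (div_pos hε hCpos)
  have hδ1 : δ ≤ 1 := min_le_left _ _
  have hδC : δ * C ≤ ε := by
    have h1 : δ ≤ ε / C := min_le_right _ _
    calc δ * C ≤ (ε / C) * C := by nlinarith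
      _ = ε := by field_simp
  -- inclusion of events
  have hsub : ∀ n, {ω : Ω | ε <
      sSup ((fun θ : ℝ × ℝ × ℝ =>
        |(∑ k : Fin m,
            (ghat n k ω - θ.1
              - θ.2.1 * ((((k : ℕ) : ℝ) + 1) * Δ) ^ (2 * θ.2.2 + 1)) ^ 2)
          - ∑ k : Fin m,
            (gbar k - θ.1
              - θ.2.1 * ((((k : ℕ) : ℝ) + 1) * Δ) ^ (2 * θ.2.2 + 1)) ^ 2|) '' Θ)} ⊆
      ⋃ k : Fin m, {ω : Ω | δ < |ghat n k ω - gbar k|} := by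
    intro n ω hω
    by_contra hcon
    simp only [mem_iUnion, mem_setOf_eq, not_exists, not_lt] at hcon
    apply absurd hω
    simp only [mem_setOf_eq, not_lt]
    apply Real.sSup_le _ hε.le
    rintro x ⟨θ, hθ, rfl⟩
    have key : ∀ k : Fin m,
        |(ghat n k ω - θ.1 - θ.2.1 * ((((k : ℕ) : ℝ) + 1) * Δ) ^ (2 * θ.2.2 + 1)) ^ 2
          - (gbar k - θ.1 - θ.2.1 * ((((k : ℕ) : ℝ) + 1) * Δ) ^ (2 * θ.2.2 + 1)) ^ 2|
        ≤ δ * (1 + 2 * max (M k) 0) := by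
      intro k
      set u := ghat n k ω - θ.1 - θ.2.1 * ((((k : ℕ) : ℝ) + 1) * Δ) ^ (2 * θ.2.2 + 1) with hu
      set v := gbar k - θ.1 - θ.2.1 * ((((k : ℕ) : ℝ) + 1) * Δ) ^ (2 * θ.2.2 + 1) with hv
      have huv : u - v = ghat n k ω - gbar k := by rw [hu, hv]; ring
      have h1 : |u - v| ≤ δ := by rw [huv]; exact hcon k
      have h2 : |v| ≤ max (M k) 0 := le_trans (hM k θ hθ) (le_max_left _ _)
      have hfact : u ^ 2 - v ^ 2 = (u - v) * ((u - v) + 2 * v) := by ring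
      calc |u ^ 2 - v ^ 2| = |u - v| * |(u - v) + 2 * v| := by
            rw [hfact, abs_mul]
        _ ≤ δ * (δ + 2 * max (M k) 0) := by
            apply mul_le_mul h1 _ (abs_nonneg _) hδpos.le
            calc |(u - v) + 2 * v| ≤ |u - v| + 2 * |v| := by
                  calc |(u - v) + 2 * v| ≤ |u - v| + |2 * v| := abs_add_le _ _
                    _ = |u - v| + 2 * |v| := by rw [abs_mul, abs_two]
              _ ≤ δ + 2 * max (M k) 0 := by linarith
        _ ≤ δ * (1 + 2 * max (M k) 0) := by nlinarith
    calc |(∑ k : Fin m,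
            (ghat n k ω - θ.1
              - θ.2.1 * ((((k : ℕ) : ℝ) + 1) * Δ) ^ (2 * θ.2.2 + 1)) ^ 2)
          - ∑ k : Fin m,
            (gbar k - θ.1
              - θ.2.1 * ((((k : ℕ) : ℝ) + 1) * Δ) ^ (2 * θ.2.2 + 1)) ^ 2|
        = |∑ k : Fin m,
            ((ghat n k ω - θ.1
              - θ.2.1 * ((((k : ℕ) : ℝ) + 1) * Δ) ^ (2 * θ.2.2 + 1)) ^ 2
             - (gbar k - θ.1
              - θ.2.1 * ((((k : ℕ) : ℝ) + 1) * Δ) ^ (2 * θ.2.2 + 1)) ^ 2)| := by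
          rw [Finset.sum_sub_distrib]
      _ ≤ ∑ k : Fin m,
            |(ghat n k ω - θ.1
              - θ.2.1 * ((((k : ℕ) : ℝ) + 1) * Δ) ^ (2 * θ.2.2 + 1)) ^ 2
             - (gbar k - θ.1
              - θ.2.1 * ((((k : ℕ) : ℝ) + 1) * Δ) ^ (2 * θ.2.2 + 1)) ^ 2| :=
          Finset.abs_sum_le_sum_abs _ _
      _ ≤ ∑ k : Fin m, δ * (1 + 2 * max (M k) 0) :=
          Finset.sum_le_sum fun k _ => key k
      _ = δ * C := by rw [hCdef, Finset.mul_sum]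
      _ ≤ ε := hδC
  -- conclude via the union bound and squeeze
  have hbound : ∀ n, P {ω : Ω | ε <
      sSup ((fun θ : ℝ × ℝ × ℝ =>
        |(∑ k : Fin m,
            (ghat n k ω - θ.1
              - θ.2.1 * ((((k : ℕ) : ℝ) + 1) * Δ) ^ (2 * θ.2.2 + 1)) ^ 2)
          - ∑ k : Fin m,
            (gbar k - θ.1
              - θ.2.1 * ((((k : ℕ) : ℝ) + 1) * Δ) ^ (2 * θ.2.2 + 1)) ^ 2|) '' Θ)} ≤
      ∑ k : Fin m, P {ω : Ω | δ < |ghat n k ω - gbar k|} := fun n =>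
    (measure_mono (hsub n)).trans ((measure_iUnion_le _).trans_eq (tsum_fintype _))
  have hsum : Tendsto
      (fun n => ∑ k : Fin m, P {ω : Ω | δ < |ghat n k ω - gbar k|}) atTop (nhds 0) := by
    have := tendsto_finset_sum (Finset.univ : Finset (Fin m))
      (fun k _ => hconv k δ hδpos)
    simpa using this
  exact tendsto_of_tendsto_of_tendsto_of_le_of_le tendsto_const_nhds hsum
    (fun n => zero_le) hbound
end
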